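/- Any two DAGs satisfying the V-OUS and collider-stable orientation rule with respect to P have exactly the same set of collider v-configurations, if and only if any two DAGs G with sk(G) = sk(P) such that P is V-OUS and collider-stable with respect to G are Markov equivalent. -/

import Mathlib

open MeasureTheory ProbabilityTheory

/-- A directed acyclic graph on vertex set `V`: a directed edge relation with no
directed cycles (a directed path from a node to itself). -/
structure DAG (V : Type*) where
  Edge : V → V → Prop
  acyclic : ∀ i, ¬ Relation.TransGen Edge i i

namespace DAG

variable {V : Type*}

/-- `i` and `j` are adjacent if there is a directed edge between them in either direction. -/
def Adj (G : DAG V) (i j : V) : Prop := G.Edge i j ∨ G.Edge j i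

/-- `an_G(C)`: the set of nodes not in `C` with a directed path to some node of `C`. -/
def ancestors (G : DAG V) (C : Set V) : Set V :=
  {i | i ∉ C ∧ ∃ j ∈ C, Relation.TransGen G.Edge i j}

/-- A path between `a` and `b` in (the skeleton of) a DAG `G`: a sequence of at least two
distinct vertices starting at `a`, ending at `b`, with consecutive vertices adjacent. -/
structure Path (G : DAG V) (a b : V) where
  n : ℕ
  npos : 0 < n
  f : Fin (n + 1) → V
  first : f 0 = a
  last : f (Fin.last n) = b
  adj : ∀ i : Fin n, G.Adj (f i.castSucc) (f i.succ)
  inj : Function.Injective f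

/-- The intermediate node at position `t` of the path is a collider on the path:
both incident edges of the path point into it. -/
def Path.ColliderAt {G : DAG V} {a b : V} (π : Path G a b) (t : ℕ)
    (h1 : 0 < t) (h2 : t < π.n) : Prop :=
  G.Edge (π.f ⟨t - 1, by omega⟩) (π.f ⟨t, by omega⟩) ∧
  G.Edge (π.f ⟨t + 1, by omega⟩) (π.f ⟨t, by omega⟩)

/-- A path is blocked by `C` if some intermediate non-collider on the path lies in `C`,
or some collider `m` on the path satisfies `m ∉ C ∪ an_G(C)`. -/
def Path.Blocked {G : DAG V} {a b : V} (π : Path G a b) (C : Set V) : Prop :=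
  ∃ (t : ℕ) (h1 : 0 < t) (h2 : t < π.n),
    (¬ π.ColliderAt t h1 h2 ∧ π.f ⟨t, by omega⟩ ∈ C) ∨
    (π.ColliderAt t h1 h2 ∧ π.f ⟨t, by omega⟩ ∉ C ∪ G.ancestors C)

/-- d-separation: every path between a node of `A` and a node of `B` is blocked by `C`. -/
def dSep (G : DAG V) (A B C : Set V) : Prop :=
  ∀ a ∈ A, ∀ b ∈ B, ∀ π : Path G a b, π.Blocked C

/-- Two DAGs are Markov equivalent if they have exactly the same d-separations. -/
def MarkovEquiv (G₁ G₂ : DAG V) : Prop :=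
  ∀ A B C : Set V, Disjoint A B → Disjoint A C → Disjoint B C →
    (G₁.dSep A B C ↔ G₂.dSep A B C)

/-- A v-configuration `i ∼ k ∼ j` in the DAG: `i, k, j` distinct, `i` and `j` each
adjacent to `k`, but `i` and `j` not adjacent. -/
def VConfig (G : DAG V) (i k j : V) : Prop :=
  i ≠ j ∧ i ≠ k ∧ j ≠ k ∧ G.Adj i k ∧ G.Adj j k ∧ ¬ G.Adj i j

/-- A collider v-configuration `i → k ← j`. -/
def IsCollider (G : DAG V) (i k j : V) : Prop :=
  G.VConfig i k j ∧ G.Edge i k ∧ G.Edge j k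

/-- A non-collider v-configuration. -/
def IsNonCollider (G : DAG V) (i k j : V) : Prop :=
  G.VConfig i k j ∧ ¬ (G.Edge i k ∧ G.Edge j k)

end DAG

/-- A v-configuration `i ∼ k ∼ j` in an undirected graph given by an adjacency relation. -/
def VConfigRel {V : Type*} (A : V → V → Prop) (i k j : V) : Prop :=
  i ≠ j ∧ i ≠ k ∧ j ≠ k ∧ A i k ∧ A j k ∧ ¬ A i j

section Prob

variable {V : Type*} {Ω : Type*} [MeasurableSpace Ω] [StandardBorelSpace Ω] [Nonempty Ω]
  {E : V → Type*} [∀ i, MeasurableSpace (E i)]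

/-- `A ⫫ B | C`: the families `(X i)_{i ∈ A}` and `(X j)_{j ∈ B}` are conditionally
independent given the σ-algebra generated by `(X k)_{k ∈ C}`, under `μ`. -/
def CI (μ : Measure Ω) [IsFiniteMeasure μ] (X : ∀ i, Ω → E i)
    (hX : ∀ i, Measurable (X i)) (A B C : Set V) : Prop :=
  CondIndepFun (MeasurableSpace.comap (fun ω => fun k : C => X k.1 ω) inferInstance)
    ((measurable_pi_iff.mpr fun k : C => hX k.1).comap_le)
    (fun ω => fun i : A => X i.1 ω) (fun ω => fun j : B => X j.1 ω) μ

variable (μ : Measure Ω) [IsFiniteMeasure μ] (X : ∀ i, Ω → E i) (hX : ∀ i, Measurable (X i))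

/-- The skeleton of `P`: distinct `i, j` are adjacent iff no `C ⊆ V \ {i,j}` renders
`{i} ⫫ {j} | C`. -/
def SkP (i j : V) : Prop :=
  i ≠ j ∧ ¬ ∃ C : Set V, C ⊆ ({i, j} : Set V)ᶜ ∧ CI μ X hX {i} {j} C

/-- `P` is Markovian to `G`: every d-separation implies the corresponding
conditional independence. -/
def MarkovTo (G : DAG V) : Prop :=
  ∀ A B C : Set V, Disjoint A B → Disjoint A C → Disjoint B C →
    G.dSep A B C → CI μ X hX A B C

/-- Adjacency faithfulness: adjacent nodes of `G` are separated by no conditioning set. -/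
def AdjFaithful (G : DAG V) : Prop :=
  ∀ i j : V, G.Adj i j → ¬ ∃ C : Set V, C ⊆ ({i, j} : Set V)ᶜ ∧ CI μ X hX {i} {j} C

/-- `sk(P) = sk(G)`. -/
def SkelEq (G : DAG V) : Prop :=
  ∀ i j : V, G.Adj i j ↔ SkP μ X hX i j

/-- V-ordered upward stability wrt `G`. -/
def VOUS (G : DAG V) : Prop :=
  ∀ i k j : V, G.IsNonCollider i k j → ∀ C : Set V, C ⊆ ({i, j, k} : Set V)ᶜ →
    CI μ X hX {i} {j} C → CI μ X hX {i} {j} (C ∪ {k})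

/-- Collider-stability wrt `G`. -/
def ColliderStable (G : DAG V) : Prop :=
  ∀ i k j : V, G.IsCollider i k j →
    ∃ C : Set V, C ⊆ ({i, j, k} : Set V)ᶜ ∧ CI μ X hX {i} {j} C

/-- V-stability of `P`. -/
def VStable : Prop :=
  ∀ i k j : V, VConfigRel (SkP μ X hX) i k j → ∀ C : Set V, C ⊆ ({i, j, k} : Set V)ᶜ →
    ¬ (CI μ X hX {i} {j} C ∧ CI μ X hX {i} {j} (C ∪ {k}))

/-- The orientation rule assigns the v-configuration `i ∼ k ∼ j` of `sk(P)` to be a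
collider. -/
def AssignedCollider (i k j : V) : Prop :=
  VConfigRel (SkP μ X hX) i k j ∧
  ∃ C : Set V, C ⊆ ({i, j, k} : Set V)ᶜ ∧
    CI μ X hX {i} {j} C ∧ ¬ CI μ X hX {i} {j} (C ∪ {k})

/-- The orientation rule assigns the v-configuration `i ∼ k ∼ j` of `sk(P)` to be a
non-collider. -/
def AssignedNonCollider (i k j : V) : Prop :=
  VConfigRel (SkP μ X hX) i k j ∧
  ∀ C : Set V, C ⊆ ({i, j} : Set V)ᶜ → CI μ X hX {i} {j} C → k ∈ C

/-- A DAG `G` satisfies the V-OUS and collider-stable orientation rule wrt `P`. -/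
def SatisfiesRule (G : DAG V) : Prop :=
  SkelEq μ X hX G ∧
  (∀ i k j : V, AssignedCollider μ X hX i k j → G.IsCollider i k j) ∧
  (∀ i k j : V, AssignedNonCollider μ X hX i k j → G.IsNonCollider i k j)

/-- Modified V-stability: any two DAGs `G` with `sk(G) = sk(P)` to which `P` is V-OUS and
collider-stable are Markov equivalent. -/
def ModifiedVStable : Prop :=
  ∀ G₁ G₂ : DAG V,
    SkelEq μ X hX G₁ → VOUS μ X hX G₁ → ColliderStable μ X hX G₁ →
    SkelEq μ X hX G₂ → VOUS μ X hX G₂ → ColliderStable μ X hX G₂ →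
    DAG.MarkovEquiv G₁ G₂

/-- Ordered upward stability wrt `G`. -/
def OUS (G : DAG V) : Prop :=
  ∀ i j k : V, i ≠ j → i ≠ k → j ≠ k → k ∈ G.ancestors {i, j} →
    ∀ C : Set V, C ⊆ ({i, j, k} : Set V)ᶜ →
      CI μ X hX {i} {j} C → CI μ X hX {i} {j} (C ∪ {k})

/-- Ordered downward stability wrt `G`. -/
def ODS (G : DAG V) : Prop :=
  ∀ i j k : V, i ≠ j → i ≠ k → j ≠ k →
    ∀ C : Set V, C ⊆ ({i, j, k} : Set V)ᶜ → k ∉ G.ancestors ({i, j} ∪ C) →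
      CI μ X hX {i} {j} (C ∪ {k}) → CI μ X hX {i} {j} C

end Prob

section Aux

open Relation

namespace DAG

variable {V : Type*}

lemma not_edge_self (G : DAG V) (u : V) : ¬ G.Edge u u :=
  fun h => G.acyclic u (TransGen.single h)

lemma edge_asymm (G : DAG V) {u v : V} (h : G.Edge u v) : ¬ G.Edge v u :=
  fun h' => G.acyclic u ((TransGen.single h).trans (TransGen.single h'))

lemma edge_ne (G : DAG V) {u v : V} (h : G.Edge u v) : u ≠ v := by
  rintro rfl; exact G.not_edge_self u h

lemma not_transGen_rev (G : DAG V) {u v : V} (h : G.Edge u v) :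
    ¬ TransGen G.Edge v u :=
  fun h' => G.acyclic u ((TransGen.single h).trans h')

lemma mem_CUan_iff (G : DAG V) {C : Set V} {m : V} :
    m ∈ C ∪ G.ancestors C ↔ m ∈ C ∨ ∃ c ∈ C, TransGen G.Edge m c := by
  by_cases hm : m ∈ C
  · simp [hm]
  · simp [Set.mem_union, ancestors, hm, Set.mem_setOf_eq]

lemma absorb (G : DAG V) {C : Set V} {u w : V} (h : TransGen G.Edge u w)
    (hw : w ∈ C ∪ G.ancestors C) : u ∈ C ∪ G.ancestors C := by
  rw [G.mem_CUan_iff] at hw ⊢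
  rcases hw with hw | ⟨c, hc, hwc⟩
  · exact Or.inr ⟨w, hw, h⟩
  · exact Or.inr ⟨c, hc, h.trans hwc⟩

lemma absorb_edge (G : DAG V) {C : Set V} {u w : V} (h : G.Edge u w)
    (hw : w ∈ C ∪ G.ancestors C) : u ∈ C ∪ G.ancestors C :=
  G.absorb (TransGen.single h) hw

/-- A collider position in a ℕ-indexed walk. -/
def colAt (G : DAG V) (f : ℕ → V) (t : ℕ) : Prop :=
  G.Edge (f (t - 1)) (f t) ∧ G.Edge (f (t + 1)) (f t)

lemma colAt_congr {G : DAG V} {f g : ℕ → V} {t t' : ℕ}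
    (h1 : g (t - 1) = f (t' - 1)) (h2 : g t = f t') (h3 : g (t + 1) = f (t' + 1)) :
    colAt G g t ↔ colAt G f t' := by
  unfold colAt; rw [h1, h2, h3]

/-- An active walk: a walk (repetitions allowed) in which every intermediate collider is
in `C ∪ an(C)` and every intermediate non-collider is outside `C`. -/
structure AWalk (G : DAG V) (C : Set V) (a b : V) where
  n : ℕ
  npos : 0 < n
  f : ℕ → V
  first : f 0 = a
  last : f n = b
  adj : ∀ t, t < n → G.Adj (f t) (f (t + 1))
  actC : ∀ t, 0 < t → t < n → colAt G f t → f t ∈ C ∪ G.ancestors C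
  actN : ∀ t, 0 < t → t < n → ¬ colAt G f t → f t ∉ C

lemma chain_transGen (r : V → V → Prop) (f : ℕ → V) {lo : ℕ} : ∀ {hi : ℕ}, lo < hi →
    (∀ s, lo ≤ s → s < hi → r (f s) (f (s + 1))) → TransGen r (f lo) (f hi) := by
  intro hi
  induction hi with
  | zero => omega
  | succ k ih =>
    intro h hc
    rcases Nat.lt_or_ge lo k with hk | hk
    · exact (ih hk fun s h1 h2 => hc s h1 (by omega)).tail (hc k (by omega) (by omega))
    · have : lo = k := by omega
      subst this
      exact TransGen.single (hc lo le_rfl (by omega))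

/-- ℕ-indexed version of a path's vertex function. -/
def Path.nf {G : DAG V} {a b : V} (π : Path G a b) : ℕ → V :=
  fun t => π.f ⟨min t π.n, Nat.lt_succ_of_le (Nat.min_le_right _ _)⟩

lemma Path.nf_eq {G : DAG V} {a b : V} (π : Path G a b) {t : ℕ} (h : t ≤ π.n) :
    π.nf t = π.f ⟨t, Nat.lt_succ_of_le h⟩ := by
  unfold Path.nf
  congr 1
  exact Fin.ext (by simp [Nat.min_eq_left h])

lemma Path.colAt_iff {G : DAG V} {a b : V} (π : Path G a b) {t : ℕ}
    (h1 : 0 < t) (h2 : t < π.n) :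
    colAt G π.nf t ↔ π.ColliderAt t h1 h2 := by
  unfold colAt Path.ColliderAt
  rw [π.nf_eq (by omega : t - 1 ≤ π.n), π.nf_eq (by omega : t ≤ π.n),
    π.nf_eq (by omega : t + 1 ≤ π.n)]

/-- An unblocked path gives an active walk. -/
def AWalk.ofPath {G : DAG V} {C : Set V} {a b : V} (π : Path G a b)
    (h : ¬ π.Blocked C) : AWalk G C a b where
  n := π.n
  npos := π.npos
  f := π.nf
  first := by
    rw [π.nf_eq (Nat.zero_le _)]
    have : (⟨0, Nat.lt_succ_of_le (Nat.zero_le _)⟩ : Fin (π.n + 1)) = 0 := Fin.ext (by simp)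
    rw [this, π.first]
  last := by
    rw [π.nf_eq le_rfl]
    have : (⟨π.n, Nat.lt_succ_of_le le_rfl⟩ : Fin (π.n + 1)) = Fin.last π.n := Fin.ext (by simp)
    rw [this, π.last]
  adj := by
    intro t ht
    rw [π.nf_eq (by omega : t ≤ π.n), π.nf_eq (by omega : t + 1 ≤ π.n)]
    have := π.adj ⟨t, ht⟩
    have e1 : (⟨t, ht⟩ : Fin π.n).castSucc = ⟨t, Nat.lt_succ_of_le (by omega)⟩ := Fin.ext (by simp)
    have e2 : (⟨t, ht⟩ : Fin π.n).succ = ⟨t + 1, Nat.lt_succ_of_le (by omega)⟩ := Fin.ext (by simp)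
    rwa [e1, e2] at this
  actC := by
    intro t h1 h2 hc
    rw [π.colAt_iff h1 h2] at hc
    by_contra hmem
    exact h ⟨t, h1, h2, Or.inr ⟨hc, by rwa [π.nf_eq (by omega : t ≤ π.n)] at hmem⟩⟩
  actN := by
    intro t h1 h2 hc hmem
    rw [π.colAt_iff h1 h2] at hc
    exact h ⟨t, h1, h2, Or.inl ⟨hc, by rwa [π.nf_eq (by omega : t ≤ π.n)] at hmem⟩⟩

lemma AWalk.splice {G : DAG V} {C : Set V} {a b : V} (W : AWalk G C a b) (hab : a ≠ b)
    {s t : ℕ} (hst : s < t) (htn : t ≤ W.n) (he : W.f s = W.f t) :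
    ∃ W' : AWalk G C a b, W'.n < W.n := by
  classical
  obtain ⟨n, npos, f, first, last, adj, actC, actN⟩ := W
  simp only at hst htn he ⊢
  set d := t - s with hd
  set m := n - d with hm
  have hdn : d ≤ n := by omega
  have hsd : s + d = t := by omega
  have hmpos : 0 < m := by
    rcases Nat.eq_zero_or_pos m with h0 | h
    · exfalso
      have hs0 : s = 0 := by omega
      have htn' : t = n := by omega
      apply hab
      rw [← first, ← last, ← htn', ← he, hs0]
    · exact h
  set g : ℕ → V := fun i => if i ≤ s then f i else f (i + d) with hg
  have hgs : ∀ i, i ≤ s → g i = f i := fun i h => if_pos h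
  have hge : ∀ i, s ≤ i → g i = f (i + d) := by
    intro i h
    rcases Nat.eq_or_lt_of_le h with rfl | h'
    · rw [hgs s le_rfl, show s + d = t from hsd]; exact he
    · exact if_neg (by omega)
  have hmles : s ≤ m := by omega
  refine ⟨⟨m, hmpos, g, ?_, ?_, ?_, ?_, ?_⟩, show m < n by omega⟩
  · rw [hgs 0 (Nat.zero_le s)]; exact first
  · rw [hge m hmles]
    have : m + d = n := by omega
    rw [this]; exact last
  · -- adjacency
    intro u hu
    rcases lt_trichotomy u s with h | rfl | h
    · rw [hgs u (by omega), hgs (u + 1) (by omega)]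
      exact adj u (by omega)
    · rw [hge u le_rfl, hge (u + 1) (by omega), hsd]
      have : u + 1 + d = t + 1 := by omega
      rw [this]
      exact adj t (by omega)
    · rw [hge u (by omega), hge (u + 1) (by omega)]
      have : u + 1 + d = (u + d) + 1 := by omega
      rw [this]
      exact adj (u + d) (by omega)
  all_goals {
    have key : ∀ p, 0 < p → p < m →
        (colAt G g p → g p ∈ C ∪ G.ancestors C) ∧ (¬ colAt G g p → g p ∉ C) := by
      intro p hp0 hpm
      rcases lt_trichotomy p s with h | rfl | h
      · have hcg : colAt G g p ↔ colAt G f p :=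
          colAt_congr (hgs _ (by omega)) (hgs _ (by omega)) (hgs _ (by omega))
        rw [hcg, hgs p (by omega)]
        exact ⟨actC p hp0 (by omega), actN p hp0 (by omega)⟩
      · -- p = s, the interesting case
        have hs0 : 0 < p := hp0
        have htltn : t < n := by omega
        have ht0 : 0 < t := by omega
        have hg1 : g (p - 1) = f (p - 1) := hgs _ (by omega)
        have hg2 : g p = f p := hgs _ le_rfl
        have hg3 : g (p + 1) = f (t + 1) := by
          rw [hge (p + 1) (by omega)]
          congr 1
          omega
        by_cases hC : f p ∈ C
        · have hcs : colAt G f p := by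
            by_contra hx
            exact actN p hs0 (by omega) hx hC
          have hct : colAt G f t := by
            by_contra hx
            exact actN t ht0 htltn hx (he ▸ hC)
          have hcol : colAt G g p := by
            refine ⟨?_, ?_⟩
            · rw [hg1, hg2]; exact hcs.1
            · rw [hg3, hg2, he]; exact hct.2
          exact ⟨fun _ => by rw [hg2]; exact Or.inl hC, fun hx => absurd hcol hx⟩
        · refine ⟨?_, fun _ => by rw [hg2]; exact hC⟩
          intro hcol
          rw [hg2]
          by_cases hcs : colAt G f p
          · exact actC p hs0 (by omega) hcs
          · have h1 : G.Edge (f (p - 1)) (f p) := by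
              have := hcol.1; rwa [hg1, hg2] at this
            have h2 : ¬ G.Edge (f (p + 1)) (f p) := fun hx => hcs ⟨h1, hx⟩
            have h3 : G.Edge (f p) (f (p + 1)) := (adj p (by omega)).resolve_right h2
            have hQ : ∃ q, p < q ∧ q ≤ t ∧ ¬ G.Edge (f q) (f (q + 1)) := by
              refine ⟨t, hst, le_rfl, fun hx => ?_⟩
              have hin : G.Edge (f (t + 1)) (f t) := by
                have := hcol.2; rwa [hg3, hg2, he] at this
              exact G.edge_asymm hx hin
            have hdec : DecidablePred fun q => p < q ∧ q ≤ t ∧ ¬ G.Edge (f q) (f (q + 1)) :=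
              Classical.decPred _
            set q₀ := Nat.find hQ with hq₀def
            obtain ⟨hq1, hq2, hq3⟩ := Nat.find_spec hQ
            have hqmin : ∀ r, r < q₀ → ¬ (p < r ∧ r ≤ t ∧ ¬ G.Edge (f r) (f (r + 1))) :=
              fun r hr => Nat.find_min hQ hr
            have hrun : ∀ r, p ≤ r → r < q₀ → G.Edge (f r) (f (r + 1)) := by
              intro r hr1 hr2
              rcases Nat.eq_or_lt_of_le hr1 with heq | hr'
              · rw [← heq]; exact h3
              · by_contra hx
                exact hqmin r hr2 ⟨hr', by omega, hx⟩
            have htrans : TransGen G.Edge (f p) (f q₀) :=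
              chain_transGen G.Edge f (by omega) hrun
            have hcq : colAt G f q₀ := by
              constructor
              · have := hrun (q₀ - 1) (by omega) (by omega)
                have hq' : q₀ - 1 + 1 = q₀ := by omega
                rwa [hq'] at this
              · exact (adj q₀ (by omega)).resolve_left hq3
            exact G.absorb htrans (actC q₀ (by omega) (by omega) hcq)
      · -- p > s
        have e1 : g (p - 1) = f (p + d - 1) := by
          rw [hge (p - 1) (by omega)]
          congr 1
          omega
        have e2 : g p = f (p + d) := hge p (by omega)
        have e3 : g (p + 1) = f (p + d + 1) := by
          rw [hge (p + 1) (by omega)]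
          congr 1
          omega
        have hcg : colAt G g p ↔ colAt G f (p + d) := colAt_congr e1 e2 e3
        rw [hcg, e2]
        exact ⟨actC (p + d) (by omega) (by omega), actN (p + d) (by omega) (by omega)⟩
    first
      | exact fun p h1 h2 hc => (key p h1 h2).1 hc
      | exact fun p h1 h2 hc => (key p h1 h2).2 hc
  }

theorem AWalk.toPath {G : DAG V} {C : Set V} {a b : V} (W : AWalk G C a b) (hab : a ≠ b) :
    ∃ π : Path G a b, ¬ π.Blocked C := by
  classical
  have hP : ∃ n, ∃ W' : AWalk G C a b, W'.n = n := ⟨W.n, W, rfl⟩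
  have hdec : DecidablePred fun n => ∃ W' : AWalk G C a b, W'.n = n := Classical.decPred _
  obtain ⟨W₀, hW₀⟩ := Nat.find_spec hP
  have hmin : ∀ m, m < Nat.find hP → ¬ ∃ W' : AWalk G C a b, W'.n = m :=
    fun m hm => Nat.find_min hP hm
  have hinj : ∀ s t : ℕ, s ≤ W₀.n → t ≤ W₀.n → W₀.f s = W₀.f t → s = t := by
    intro s t hs ht hf
    by_contra hne
    rcases lt_trichotomy s t with h | h | h
    · obtain ⟨W', hW'⟩ := W₀.splice hab h ht hf
      exact hmin W'.n (by omega) ⟨W', rfl⟩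
    · exact hne h
    · obtain ⟨W', hW'⟩ := W₀.splice hab h hs hf.symm
      exact hmin W'.n (by omega) ⟨W', rfl⟩
  refine ⟨⟨W₀.n, W₀.npos, fun i => W₀.f i.val, W₀.first, W₀.last,
    fun i => W₀.adj i.val i.isLt,
    fun i j h => Fin.ext (hinj i.val j.val (by omega) (by omega) h)⟩, ?_⟩
  rintro ⟨t, h1, h2, hcase⟩
  simp only [Path.ColliderAt] at hcase
  rcases hcase with ⟨hnc, hmem⟩ | ⟨hc, hmem⟩
  · exact W₀.actN t h1 h2 (fun hx => hnc ⟨hx.1, hx.2⟩) hmem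
  · exact hmem (W₀.actC t h1 h2 ⟨hc.1, hc.2⟩)


lemma Path.nf_first {G : DAG V} {a b : V} (π : Path G a b) : π.nf 0 = a := by
  rw [π.nf_eq (Nat.zero_le _)]
  have : (⟨0, Nat.lt_succ_of_le (Nat.zero_le _)⟩ : Fin (π.n + 1)) = 0 := Fin.ext (by simp)
  rw [this, π.first]

lemma Path.nf_last {G : DAG V} {a b : V} (π : Path G a b) : π.nf π.n = b := by
  rw [π.nf_eq le_rfl]
  have : (⟨π.n, Nat.lt_succ_of_le le_rfl⟩ : Fin (π.n + 1)) = Fin.last π.n := Fin.ext (by simp)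
  rw [this, π.last]

lemma Path.nf_adj {G : DAG V} {a b : V} (π : Path G a b) {t : ℕ} (ht : t < π.n) :
    G.Adj (π.nf t) (π.nf (t + 1)) := by
  rw [π.nf_eq (by omega : t ≤ π.n), π.nf_eq (by omega : t + 1 ≤ π.n)]
  have := π.adj ⟨t, ht⟩
  have e1 : (⟨t, ht⟩ : Fin π.n).castSucc = ⟨t, Nat.lt_succ_of_le (by omega)⟩ := Fin.ext (by simp)
  have e2 : (⟨t, ht⟩ : Fin π.n).succ = ⟨t + 1, Nat.lt_succ_of_le (by omega)⟩ := Fin.ext (by simp)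
  rwa [e1, e2] at this

/-- If `i` and `j` are non-adjacent and `i` is not a descendant of `j`, every path from
`i` to `j` is blocked by the parents of `j`. -/
lemma blocked_parents {G : DAG V} {i j : V} (hna : ¬ G.Adj i j)
    (hnd : ¬ Relation.TransGen G.Edge j i) (π : Path G i j) :
    π.Blocked {p | G.Edge p j} := by
  classical
  set C : Set V := {p | G.Edge p j} with hC
  set n := π.n with hn
  set f := π.nf with hf
  have hnpos := π.npos
  have hfirst : f 0 = i := π.nf_first
  have hlast : f n = j := π.nf_last
  have hn2 : 2 ≤ n := by
    rcases Nat.lt_or_ge n 2 with h | h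
    · exfalso
      have hn1 : n = 1 := by omega
      have h2 := π.nf_adj (show 0 < π.n by omega)
      rw [← hf, hfirst, show (0:ℕ) + 1 = n from by omega, hlast] at h2
      exact hna h2
    · exact h
  have e1 : n - 1 + 1 = n := by omega
  have hadj := π.nf_adj (show n - 1 < π.n by omega)
  rw [← hf, e1, hlast] at hadj
  rcases hadj with h | h
  · -- f (n-1) is a parent of j: non-collider in C
    refine ⟨n - 1, by omega, by omega, Or.inl ⟨?_, ?_⟩⟩
    · rw [← π.colAt_iff (by omega) (by omega)]
      rintro ⟨-, hc2⟩
      rw [← hf, e1, hlast] at hc2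
      exact G.edge_asymm h hc2
    · rw [← π.nf_eq (by omega : n - 1 ≤ π.n)]
      exact h
  · -- edge j → f (n-1): find the first collider from the right
    have hQ : ∃ q, q < n ∧ ∀ s, q ≤ s → s < n → G.Edge (f (s + 1)) (f s) := by
      refine ⟨n - 1, by omega, fun s h1 h2 => ?_⟩
      have : s = n - 1 := by omega
      subst this
      rw [e1, hlast]
      exact h
    have hdec : DecidablePred fun q => q < n ∧ ∀ s, q ≤ s → s < n → G.Edge (f (s + 1)) (f s) :=
      Classical.decPred _
    obtain ⟨hq1, hq2⟩ := Nat.find_spec hQ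
    set q₀ := Nat.find hQ with hq₀def
    have hq0 : 0 < q₀ := by
      rcases Nat.eq_zero_or_pos q₀ with h0 | h
      · exfalso
        have hchain : Relation.TransGen (Function.swap G.Edge) (f 0) (f n) :=
          chain_transGen _ f (by omega) (by
            intro s hs1 hs2
            exact hq2 s (by omega) hs2)
        rw [hfirst, hlast] at hchain
        exact hnd (Relation.transGen_swap.mp hchain)
      · exact h
    have hq3 : ¬ G.Edge (f q₀) (f (q₀ - 1)) := by
      intro hx
      have : q₀ - 1 < n ∧ ∀ s, q₀ - 1 ≤ s → s < n → G.Edge (f (s + 1)) (f s) := by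
        refine ⟨by omega, fun s hs1 hs2 => ?_⟩
        rcases Nat.eq_or_lt_of_le hs1 with heq | hlt
        · rw [← heq, show q₀ - 1 + 1 = q₀ from by omega]
          exact hx
        · exact hq2 s (by omega) hs2
      exact Nat.find_min hQ (show q₀ - 1 < q₀ by omega) this
    have hq4 : G.Edge (f (q₀ - 1)) (f q₀) := by
      have hh := π.nf_adj (show q₀ - 1 < π.n by omega)
      rw [← hf, show q₀ - 1 + 1 = q₀ from by omega] at hh
      exact hh.resolve_right hq3
    have hdesc : Relation.TransGen G.Edge j (f q₀) := by
      have hchain : Relation.TransGen (Function.swap G.Edge) (f q₀) (f n) :=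
        chain_transGen _ f (by omega) (fun s hs1 hs2 => hq2 s hs1 hs2)
      rw [hlast] at hchain
      exact Relation.transGen_swap.mp hchain
    refine ⟨q₀, by omega, by omega, Or.inr ⟨?_, ?_⟩⟩
    · rw [← π.colAt_iff (by omega) (by omega)]
      exact ⟨by rw [← hf]; exact hq4, by rw [← hf]; exact hq2 q₀ le_rfl hq1⟩
    · rw [← π.nf_eq (by omega : q₀ ≤ π.n)]
      rw [G.mem_CUan_iff]
      rintro (hmem | ⟨c, hc, htr⟩)
      · exact G.acyclic j (hdesc.trans (Relation.TransGen.single hmem))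
      · exact G.acyclic j ((hdesc.trans htr).trans (Relation.TransGen.single hc))

/-- The length-two path `i ~ k ~ j`. -/
def twoPath (G : DAG V) (i k j : V) (hik : G.Adj i k) (hjk : G.Adj j k)
    (hij : i ≠ j) (hik' : i ≠ k) (hjk' : j ≠ k) : Path G i j where
  n := 2
  npos := by omega
  f := fun t => if t.val = 0 then i else if t.val = 1 then k else j
  first := rfl
  last := rfl
  adj := by
    intro t
    have := t.isLt
    rcases (show t.val = 0 ∨ t.val = 1 from by omega) with ht | ht
    · have ec : t.castSucc = (0 : Fin 3) := Fin.ext (by simp [ht])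
      have es : t.succ = (1 : Fin 3) := Fin.ext (by simp [ht])
      rw [ec, es]
      exact hik
    · have ec : t.castSucc = (1 : Fin 3) := Fin.ext (by simp [ht])
      have es : t.succ = (2 : Fin 3) := Fin.ext (by simp [ht])
      rw [ec, es]
      exact hjk.symm
  inj := by
    intro a b hab
    have ha := a.isLt
    have hb := b.isLt
    refine Fin.ext ?_
    simp only at hab
    rcases (show a.val = 0 ∨ a.val = 1 ∨ a.val = 2 from by omega) with h | h | h <;>
      rcases (show b.val = 0 ∨ b.val = 1 ∨ b.val = 2 from by omega) with h' | h' | h' <;>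
        simp [h, h'] at hab ⊢ <;> first | tauto | (exact absurd hab.symm (by tauto)) | tauto

lemma collider_contra {G₁ G₂ : DAG V} (hsk : ∀ u v, G₁.Adj u v ↔ G₂.Adj u v)
    (hme : G₁.MarkovEquiv G₂) {i k j : V} (h₁ : G₁.IsCollider i k j)
    (hC2 : ¬ (G₂.Edge i k ∧ G₂.Edge j k)) (hnd : ¬ Relation.TransGen G₁.Edge j i) : False := by
  obtain ⟨⟨hij, hik, hjk, haik, hajk, hnij⟩, e1, e2⟩ := h₁
  set C : Set V := {p | G₁.Edge p j} with hC
  have hiC : i ∉ C := fun hx => hnij (Or.inl hx)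
  have hjC : j ∉ C := fun hx => G₁.not_edge_self j hx
  have hsep₁ : G₁.dSep {i} {j} C := by
    rintro a rfl b rfl π
    exact blocked_parents hnij hnd π
  have hsep₂ : G₂.dSep {i} {j} C := by
    refine (hme {i} {j} C ?_ ?_ ?_).1 hsep₁
    · simpa using hij
    · simpa using hiC
    · simpa using hjC
  -- build the path i ~ k ~ j in G₂
  have haik₂ : G₂.Adj i k := (hsk _ _).1 haik
  have hajk₂ : G₂.Adj j k := (hsk _ _).1 hajk
  obtain ⟨t, h1, h2, hcase⟩ := hsep₂ i rfl j rfl (G₂.twoPath i k j haik₂ hajk₂ hij hik hjk)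
  have h2' : t < 2 := h2
  have ht1 : t = 1 := by omega
  subst ht1
  have hv0 : (G₂.twoPath i k j haik₂ hajk₂ hij hik hjk).f ⟨1 - 1, by omega⟩ = i := rfl
  have hv1 : (G₂.twoPath i k j haik₂ hajk₂ hij hik hjk).f ⟨1, by omega⟩ = k := rfl
  have hv2 : (G₂.twoPath i k j haik₂ hajk₂ hij hik hjk).f ⟨1 + 1, by omega⟩ = j := rfl
  rcases hcase with ⟨hnc, hmem⟩ | ⟨hc, _⟩
  · rw [hv1] at hmem
    exact G₁.edge_asymm e2 hmem
  · obtain ⟨hcol1, hcol2⟩ := hc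
    rw [hv0, hv1] at hcol1
    rw [hv2, hv1] at hcol2
    exact hC2 ⟨hcol1, hcol2⟩

/-- Markov equivalent DAGs with the same skeleton have the same colliders. -/
lemma same_colliders_of_markovEquiv {G₁ G₂ : DAG V} (hsk : ∀ u v, G₁.Adj u v ↔ G₂.Adj u v)
    (hme : G₁.MarkovEquiv G₂) {i k j : V} (h : G₁.IsCollider i k j) : G₂.IsCollider i k j := by
  have hvc₂ : G₂.VConfig i k j := by
    obtain ⟨⟨hij, hik, hjk, haik, hajk, hnij⟩, e1, e2⟩ := h
    exact ⟨hij, hik, hjk, (hsk _ _).1 haik, (hsk _ _).1 hajk, fun hx => hnij ((hsk _ _).2 hx)⟩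
  refine ⟨hvc₂, ?_⟩
  by_contra hne
  by_cases hd : Relation.TransGen G₁.Edge j i
  · have hnd : ¬ Relation.TransGen G₁.Edge i j := fun hx => G₁.acyclic i (hx.trans hd)
    obtain ⟨⟨hij, hik, hjk, haik, hajk, hnij⟩, e1, e2⟩ := h
    exact collider_contra hsk hme
      ⟨⟨hij.symm, hjk, hik, hajk, haik, fun hx => hnij hx.symm⟩, e2, e1⟩
      (fun hx => hne ⟨hx.2, hx.1⟩) hnd
  · exact collider_contra hsk hme h hne hd


/-- A covered edge: `x → y` with `pa(y) = pa(x) ∪ {x}`. -/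
def CoveredEdge (G : DAG V) (x y : V) : Prop :=
  G.Edge x y ∧ ∀ z, z ≠ x → (G.Edge z y ↔ G.Edge z x)

section Reversal

open Relation

variable {G : DAG V} {x y : V}

lemma CoveredEdge.ne (hcov : CoveredEdge G x y) : x ≠ y := G.edge_ne hcov.1

lemma cov_no_alt_path (hcov : CoveredEdge G x y) :
    ¬ TransGen (fun u v => G.Edge u v ∧ ¬(u = x ∧ v = y)) x y := by
  intro h
  obtain ⟨p, hp, hpc⟩ := TransGen.tail'_iff.mp h
  have hpx : p ≠ x := fun hx => hpc.2 ⟨hx, rfl⟩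
  have hedge : G.Edge p x := (hcov.2 p hpx).mp hpc.1
  have hp' : ReflTransGen G.Edge x p := ReflTransGen.mono (fun a b hab => hab.1) _ _ hp
  exact G.acyclic x (TransGen.tail' hp' hedge)

lemma cov_decomp (hcov : CoveredEdge G x y) {a b : V}
    (h : TransGen (fun u v => (G.Edge u v ∧ ¬(u = x ∧ v = y)) ∨ (u = y ∧ v = x)) a b) :
    TransGen (fun u v => G.Edge u v ∧ ¬(u = x ∧ v = y)) a b ∨
      (ReflTransGen (fun u v => G.Edge u v ∧ ¬(u = x ∧ v = y)) a y ∧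
       ReflTransGen (fun u v => G.Edge u v ∧ ¬(u = x ∧ v = y)) x b) := by
  set E₀ := fun u v => G.Edge u v ∧ ¬(u = x ∧ v = y) with hE₀
  induction h using TransGen.head_induction_on with
  | single h =>
    rcases h with h | ⟨rfl, rfl⟩
    · exact Or.inl (TransGen.single h)
    · exact Or.inr ⟨ReflTransGen.refl, ReflTransGen.refl⟩
  | head h' hTG ih =>
    rename_i a' c'
    rcases h' with h' | ⟨rfl, rfl⟩
    · rcases ih with ih | ⟨ih1, ih2⟩
      · exact Or.inl (ih.head h')
      · exact Or.inr ⟨ih1.head h', ih2⟩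
    · rcases ih with ih | ⟨ih1, ih2⟩
      · exact Or.inr ⟨ReflTransGen.refl, ih.to_reflTransGen⟩
      · exfalso
        rcases reflTransGen_iff_eq_or_transGen.mp ih1 with heq | hTG'
        · exact hcov.ne heq.symm
        · exact cov_no_alt_path hcov hTG'

/-- The DAG obtained by reversing a covered edge `x → y`. -/
def revDAG (G : DAG V) (x y : V) (hcov : CoveredEdge G x y) : DAG V where
  Edge u v := (G.Edge u v ∧ ¬(u = x ∧ v = y)) ∨ (u = y ∧ v = x)
  acyclic := by
    intro v hv
    rcases cov_decomp hcov hv with h | ⟨h1, h2⟩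
    · exact G.acyclic v (TransGen.mono (fun a b hab => hab.1) _ _ h)
    · have hxy : ReflTransGen (fun u v => G.Edge u v ∧ ¬(u = x ∧ v = y)) x y := h2.trans h1
      rcases reflTransGen_iff_eq_or_transGen.mp hxy with heq | hTG'
      · exact hcov.ne heq.symm
      · exact cov_no_alt_path hcov hTG'

variable (hcov : CoveredEdge G x y)

lemma rev_edge_yx : (revDAG G x y hcov).Edge y x := Or.inr ⟨rfl, rfl⟩

lemma rev_edge_of {u v : V} (h : G.Edge u v) (h1 : ¬(u = x ∧ v = y)) :
    (revDAG G x y hcov).Edge u v := Or.inl ⟨h, h1⟩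

lemma rev_edge_iff' {u v : V} (h1 : ¬(u = x ∧ v = y)) (h2 : ¬(u = y ∧ v = x)) :
    ((revDAG G x y hcov).Edge u v ↔ G.Edge u v) := by
  constructor
  · rintro (⟨h, -⟩ | h)
    · exact h
    · exact absurd h h2
  · intro h
    exact Or.inl ⟨h, h1⟩

lemma rev_not_edge_xy : ¬ (revDAG G x y hcov).Edge x y := by
  rintro (⟨-, hn⟩ | ⟨rfl, -⟩)
  · exact hn ⟨rfl, rfl⟩
  · exact hcov.ne rfl

lemma rev_adj {u v : V} : (revDAG G x y hcov).Adj u v ↔ G.Adj u v := by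
  classical
  constructor
  · rintro (h | h)
    · rcases h with ⟨h, -⟩ | ⟨rfl, rfl⟩
      · exact Or.inl h
      · exact Or.inr hcov.1
    · rcases h with ⟨h, -⟩ | ⟨rfl, rfl⟩
      · exact Or.inr h
      · exact Or.inl hcov.1
  · rintro (h | h)
    · by_cases hc : u = x ∧ v = y
      · obtain ⟨rfl, rfl⟩ := hc
        exact Or.inr (rev_edge_yx hcov)
      · exact Or.inl (rev_edge_of hcov h hc)
    · by_cases hc : v = x ∧ u = y
      · obtain ⟨rfl, rfl⟩ := hc
        exact Or.inl (rev_edge_yx hcov)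
      · exact Or.inr (rev_edge_of hcov h hc)

lemma rev_an {C : Set V} {m : V} (hm : m ∈ C ∪ G.ancestors C) :
    m ∈ C ∪ (revDAG G x y hcov).ancestors C ∨
      (m = x ∧ y ∈ C ∪ (revDAG G x y hcov).ancestors C) := by
  classical
  set G' := revDAG G x y hcov with hG'
  rw [G.mem_CUan_iff] at hm
  rcases hm with hm | ⟨c, hc, htr⟩
  · exact Or.inl (Or.inl hm)
  · induction htr using TransGen.head_induction_on with
    | single h =>
      rename_i a
      by_cases hax : a = x ∧ c = y
      · exact Or.inr ⟨hax.1, Or.inl (hax.2 ▸ hc)⟩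
      · exact Or.inl (G'.absorb_edge (rev_edge_of hcov h hax) (Or.inl hc))
    | head h' hTG ih =>
      rename_i a w
      by_cases hax : a = x ∧ w = y
      · obtain ⟨rfl, rfl⟩ := hax
        rcases ih with ih | ⟨hyx, -⟩
        · exact Or.inr ⟨rfl, ih⟩
        · exact absurd hyx.symm hcov.ne
      · rcases ih with ih | ⟨heq, hy⟩
        · exact Or.inl (G'.absorb_edge (rev_edge_of hcov h' hax) ih)
        · have h'' : G.Edge a x := heq ▸ h'
          have haxne : a ≠ x := G.edge_ne h''
          have hay : G.Edge a y := (hcov.2 a haxne).mpr h''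
          exact Or.inl (G'.absorb_edge (rev_edge_of hcov hay (fun hx => haxne hx.1)) hy)

lemma rev_isCollider_iff {i k j : V} :
    (revDAG G x y hcov).IsCollider i k j ↔ G.IsCollider i k j := by
  set G' := revDAG G x y hcov with hG'
  have hvc : G'.VConfig i k j ↔ G.VConfig i k j := by
    unfold VConfig
    rw [rev_adj hcov, rev_adj hcov, rev_adj hcov]
  constructor
  · rintro ⟨vc', e1', e2'⟩
    have vc := hvc.1 vc'
    obtain ⟨hij, hik, hjk, haik, hajk, hnij⟩ := vc
    have key : ∀ p q : V, p ≠ q → ¬ G.Adj p q → G'.Edge p k → G'.Edge q k → G.Edge p k := by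
      intro p q hpq hnadj hp hq
      rcases hp with ⟨h, -⟩ | ⟨hpy, hkx⟩
      · exact h
      · exfalso
        rcases hq with ⟨hqk, -⟩ | ⟨hqy, -⟩
        · have hqx : G.Edge q x := by rw [← hkx]; exact hqk
          have hqy : G.Edge q y := (hcov.2 q (G.edge_ne hqx)).mpr hqx
          refine hnadj (Or.inr ?_)
          rw [hpy]; exact hqy
        · exact hpq (hpy.trans hqy.symm)
    exact ⟨⟨hij, hik, hjk, haik, hajk, hnij⟩, key i j hij hnij e1' e2',
      key j i (fun h => hij h.symm) (fun h => hnij h.symm) e2' e1'⟩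
  · rintro ⟨vc, e1, e2⟩
    obtain ⟨hij, hik, hjk, haik, hajk, hnij⟩ := vc
    refine ⟨hvc.2 ⟨hij, hik, hjk, haik, hajk, hnij⟩, ?_, ?_⟩
    · refine rev_edge_of hcov e1 ?_
      rintro ⟨hix, hky⟩
      have hjy : G.Edge j y := by rw [← hky]; exact e2
      have hjnx : j ≠ x := by rw [← hix]; exact fun h => hij h.symm
      have hjx : G.Edge j x := (hcov.2 j hjnx).mp hjy
      refine hnij (Or.inr ?_)
      rw [hix]; exact hjx
    · refine rev_edge_of hcov e2 ?_
      rintro ⟨hjx, hky⟩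
      have hiy : G.Edge i y := by rw [← hky]; exact e1
      have hinx : i ≠ x := by rw [← hjx]; exact hij
      have hix : G.Edge i x := (hcov.2 i hinx).mp hiy
      refine hnij (Or.inl ?_)
      rw [hjx]; exact hix

lemma rev_covered : CoveredEdge (revDAG G x y hcov) y x := by
  refine ⟨rev_edge_yx hcov, ?_⟩
  intro z hzy
  classical
  by_cases hzx : z = x
  · constructor
    · intro h
      rw [hzx] at h
      exact absurd h ((revDAG G x y hcov).not_edge_self x)
    · intro h
      rw [hzx] at h
      exact absurd h (rev_not_edge_xy hcov)
  · have h1 : ((revDAG G x y hcov).Edge z x ↔ G.Edge z x) :=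
      rev_edge_iff' hcov (fun hx => hcov.ne hx.2) (fun hx => hzy hx.1)
    have h2 : ((revDAG G x y hcov).Edge z y ↔ G.Edge z y) :=
      rev_edge_iff' hcov (fun hx => hzx hx.1) (fun hx => hzy hx.1)
    rw [h1, h2]
    exact (hcov.2 z hzx).symm

lemma revrev_edge {u v : V} :
    ((revDAG (revDAG G x y hcov) y x (rev_covered hcov)).Edge u v ↔ G.Edge u v) := by
  constructor
  · rintro (⟨h, hn⟩ | ⟨rfl, rfl⟩)
    · rcases h with ⟨h, -⟩ | ⟨rfl, rfl⟩
      · exact h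
      · exact absurd ⟨rfl, rfl⟩ hn
    · exact hcov.1
  · intro h
    by_cases hc : u = x ∧ v = y
    · exact Or.inr ⟨hc.1, hc.2⟩
    · refine Or.inl ⟨rev_edge_of hcov h hc, ?_⟩
      rintro ⟨rfl, rfl⟩
      exact G.edge_asymm hcov.1 h

end Reversal

section Transport

lemma transGen_congr {G₁ G₂ : DAG V} (h : ∀ u v, G₁.Edge u v ↔ G₂.Edge u v) {p q : V} :
    Relation.TransGen G₁.Edge p q ↔ Relation.TransGen G₂.Edge p q :=
  ⟨fun hx => Relation.TransGen.mono (fun a b => (h a b).1) _ _ hx,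
    fun hx => Relation.TransGen.mono (fun a b => (h a b).2) _ _ hx⟩

lemma ancestors_congr {G₁ G₂ : DAG V} (h : ∀ u v, G₁.Edge u v ↔ G₂.Edge u v) (C : Set V) :
    G₁.ancestors C = G₂.ancestors C := by
  ext m
  unfold ancestors
  simp only [Set.mem_setOf_eq]
  constructor
  · rintro ⟨h1, c, hc, htr⟩
    exact ⟨h1, c, hc, (transGen_congr h).mp htr⟩
  · rintro ⟨h1, c, hc, htr⟩
    exact ⟨h1, c, hc, (transGen_congr h).mpr htr⟩

lemma dSep_congr {G₁ G₂ : DAG V} (h : ∀ u v, G₁.Edge u v ↔ G₂.Edge u v) {A B C : Set V}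
    (hsep : G₁.dSep A B C) : G₂.dSep A B C := by
  intro a ha b hb π
  have hadj : ∀ u v, G₁.Adj u v ↔ G₂.Adj u v := by
    intro u v
    unfold Adj
    rw [h u v, h v u]
  let π₁ : Path G₁ a b :=
    ⟨π.n, π.npos, π.f, π.first, π.last, fun i => (hadj _ _).2 (π.adj i), π.inj⟩
  obtain ⟨t, h1, h2, hcase⟩ := hsep a ha b hb π₁
  have hcoll : ∀ (h1 : 0 < t) (h2 : t < π.n), (π₁.ColliderAt t h1 h2 ↔ π.ColliderAt t h1 h2) := by
    intro h1 h2
    unfold Path.ColliderAt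
    rw [h, h]
  refine ⟨t, h1, h2, ?_⟩
  rcases hcase with ⟨hnc, hmem⟩ | ⟨hc, hmem⟩
  · exact Or.inl ⟨fun hx => hnc ((hcoll h1 h2).2 hx), hmem⟩
  · refine Or.inr ⟨(hcoll h1 h2).1 hc, ?_⟩
    rwa [ancestors_congr h C] at hmem

lemma markovEquiv_of_edge_iff {G₁ G₂ : DAG V} (h : ∀ u v, G₁.Edge u v ↔ G₂.Edge u v) :
    G₁.MarkovEquiv G₂ := by
  intro A B C _ _ _
  exact ⟨dSep_congr h, dSep_congr (fun u v => (h u v).symm)⟩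

end Transport


section Surgery

open Relation

variable {G : DAG V} {x y : V}

/-- Core lemma: an active walk in `G` can be transformed into an active walk in the
DAG obtained by reversing a covered edge. -/
lemma rev_surgery (hcov : CoveredEdge G x y) {C : Set V} {a b : V}
    (n : ℕ) (npos : 0 < n) (f : ℕ → V)
    (hfirst : f 0 = a) (hlast : f n = b)
    (hadjf : ∀ t, t < n → G.Adj (f t) (f (t + 1)))
    (hactC : ∀ t, 0 < t → t < n → colAt G f t → f t ∈ C ∪ G.ancestors C)
    (hactN : ∀ t, 0 < t → t < n → ¬ colAt G f t → f t ∉ C)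
    (hinj : ∀ s t, s ≤ n → t ≤ n → f s = f t → s = t) :
    Nonempty (AWalk (revDAG G x y hcov) C a b) := by
  classical
  set G' := revDAG G x y hcov with hG'
  have hxy : G.Edge x y := hcov.1
  have hxny : x ≠ y := hcov.ne
  -- pairs that are not the reversed edge
  have epair : ∀ u v : V, ¬(u = x ∧ v = y) → ¬(v = x ∧ u = y) → (G'.Edge u v ↔ G.Edge u v) :=
    fun u v h1 h2 => rev_edge_iff' hcov h1 (fun hh => h2 ⟨hh.2, hh.1⟩)
  have hcolc : ∀ (g : ℕ → V) (p : ℕ),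
      (¬(g (p-1) = x ∧ g p = y)) → (¬(g p = x ∧ g (p-1) = y)) →
      (¬(g p = x ∧ g (p+1) = y)) → (¬(g (p+1) = x ∧ g p = y)) →
      (colAt G' g p ↔ colAt G g p) := by
    intro g p h1 h2 h3 h4
    unfold colAt
    rw [epair _ _ h1 h2, epair _ _ h4 h3]
  by_cases hT : ∃ t, t < n ∧ ((f t = x ∧ f (t + 1) = y) ∨ (f t = y ∧ f (t + 1) = x))
  · obtain ⟨t₀, htn, htrav⟩ := hT
    rcases htrav with ⟨hvx, hvy⟩ | ⟨hvy, hvx⟩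
    · -- traversal x → y at t₀
      have hxuniq : ∀ s, s ≤ n → f s = x → s = t₀ :=
        fun s hs he => hinj s t₀ hs (by omega) (by rw [he, hvx])
      have hyuniq : ∀ s, s ≤ n → f s = y → s = t₀ + 1 :=
        fun s hs he => hinj s (t₀ + 1) hs (by omega) (by rw [he, hvy])
      have hok : ∀ s, s < n → s ≠ t₀ →
          (¬(f s = x ∧ f (s+1) = y)) ∧ (¬(f s = y ∧ f (s+1) = x)) := by
        intro s hs hst
        constructor
        · rintro ⟨h1, -⟩
          exact hst (hxuniq s (by omega) h1)
        · rintro ⟨h1, h2⟩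
          have e1 := hyuniq s (by omega) h1
          have e2 := hxuniq (s+1) (by omega) h2
          omega
      by_cases h1a : 0 < t₀ ∧ G.Edge (f (t₀ - 1)) x
      · -- Case 1a: u → x exists; delete x, reroute through u → y
        obtain ⟨ht0, hux⟩ := h1a
        have hcolgen : ∀ p, 0 < p → p < n → p - 1 ≠ t₀ → p ≠ t₀ →
            (colAt G' f p ↔ colAt G f p) := by
          intro p h0 hn hne1 hne2
          have o1 := hok (p - 1) (by omega) hne1
          have o2 := hok p (by omega) hne2
          rw [show p - 1 + 1 = p from by omega] at o1
          exact hcolc f p (fun h => o1.1 ⟨h.1, h.2⟩) (fun h => o1.2 ⟨h.2, h.1⟩)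
            (fun h => o2.1 ⟨h.1, h.2⟩) (fun h => o2.2 ⟨h.2, h.1⟩)
        have hunx : f (t₀ - 1) ≠ x := G.edge_ne hux
        have huy : G.Edge (f (t₀ - 1)) y := (hcov.2 _ hunx).mpr hux
        have hE1 : G'.Edge (f (t₀ - 1)) y := rev_edge_of hcov huy (fun h => hunx h.1)
        have hnyu : ¬ G'.Edge y (f (t₀ - 1)) := by
          rintro (⟨h, -⟩ | ⟨-, h⟩)
          · exact G.acyclic x (((TransGen.single hxy).trans (TransGen.single h)).trans
              (TransGen.single hux))
          · exact hunx h
        set g : ℕ → V := fun i => if i < t₀ then f i else f (i + 1) with hgdef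
        have hg1 : ∀ i, i < t₀ → g i = f i := fun i h => if_pos h
        have hg2 : ∀ i, t₀ ≤ i → g i = f (i + 1) := fun i h => if_neg (by omega)
        refine ⟨⟨n - 1, by omega, g, ?_, ?_, ?_, ?_, ?_⟩⟩
        · rw [hg1 0 (by omega)]; exact hfirst
        · rw [hg2 (n - 1) (by omega), show n - 1 + 1 = n from by omega]; exact hlast
        · intro s hs
          rcases Nat.lt_trichotomy (s + 1) t₀ with hlt | heq | hgt
          · rw [hg1 s (by omega), hg1 (s + 1) hlt]
            exact (rev_adj hcov).mpr (hadjf s (by omega))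
          · rw [hg1 s (by omega), hg2 (s + 1) (by omega),
              show s + 1 + 1 = t₀ + 1 from by omega, hvy, show s = t₀ - 1 from by omega]
            exact Or.inl hE1
          · rw [hg2 s (by omega), hg2 (s + 1) (by omega)]
            exact (rev_adj hcov).mpr (hadjf (s + 1) (by omega))
        · -- actC
          intro p h0 hn hcol'
          rcases Nat.lt_trichotomy (p + 1) t₀ with hlt | heq | hgt
          · have hcg : colAt G' g p ↔ colAt G' f p :=
              colAt_congr (hg1 _ (by omega)) (hg1 _ (by omega)) (hg1 _ (by omega))
            have hcol : colAt G f p :=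
              (hcolgen p h0 (by omega) (by omega) (by omega)).mp (hcg.mp hcol')
            rw [hg1 p (by omega)]
            rcases rev_an hcov (hactC p h0 (by omega) hcol) with h | ⟨hfx2, -⟩
            · exact h
            · exact absurd (hxuniq p (by omega) hfx2) (by omega)
          · exfalso
            have h2 := hcol'.2
            rw [hg2 (p + 1) (by omega), show p + 1 + 1 = t₀ + 1 from by omega, hvy,
              hg1 p (by omega), show p = t₀ - 1 from by omega] at h2
            exact hnyu h2
          · rcases eq_or_ne p t₀ with rfl | hne
            · -- p = t₀ : vertex y, triple (f (t₀-1), y, f (t₀+2))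
              have h2 := hcol'.2
              rw [hg2 (p + 1) (by omega), hg2 p le_rfl, hvy] at h2
              have hfx2 : f (p + 1 + 1) ≠ x := by
                intro hh
                have := hxuniq (p + 1 + 1) (by omega) hh
                omega
              have h2' : G.Edge (f (p + 1 + 1)) y :=
                (epair _ _ (fun hh => hfx2 hh.1) (fun hh => hxny hh.1.symm)).mp h2
              have hcolf : colAt G f (p + 1) := by
                constructor
                · rw [show p + 1 - 1 = p from by omega, hvx, hvy]; exact hxy
                · rw [hvy]; exact h2'
              have hmem := hactC (p + 1) (by omega) (by omega) hcolf
              rcases rev_an hcov hmem with h | ⟨hyx2, -⟩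
              · rw [hg2 p le_rfl, hvy]; rw [hvy] at h; exact h
              · rw [hvy] at hyx2; exact absurd hyx2.symm hxny
            · -- p > t₀ : shifted
              have hcg : colAt G' g p ↔ colAt G' f (p + 1) :=
                colAt_congr (by rw [hg2 _ (by omega), show p - 1 + 1 = p + 1 - 1 from by omega])
                  (hg2 _ (by omega)) (by rw [hg2 _ (by omega)])
              have hcol : colAt G f (p + 1) :=
                (hcolgen (p + 1) (by omega) (by omega) (by omega) (by omega)).mp (hcg.mp hcol')
              rw [hg2 p (by omega)]
              rcases rev_an hcov (hactC (p + 1) (by omega) (by omega) hcol) with h | ⟨hfx2, -⟩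
              · exact h
              · exact absurd (hxuniq (p + 1) (by omega) hfx2) (by omega)
        · -- actN
          intro p h0 hn hcol'
          rcases Nat.lt_trichotomy (p + 1) t₀ with hlt | heq | hgt
          · rw [hg1 p (by omega)]
            refine hactN p h0 (by omega) (fun hc => hcol' ?_)
            exact (colAt_congr (hg1 _ (by omega)) (hg1 _ (by omega)) (hg1 _ (by omega))).mpr
              ((hcolgen p h0 (by omega) (by omega) (by omega)).mpr hc)
          · rw [hg1 p (by omega)]
            refine hactN p h0 (by omega) (fun hc => ?_)
            have h2 := hc.2
            rw [heq, hvx, show p = t₀ - 1 from by omega] at h2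
            exact G.edge_asymm hux h2
          · rcases eq_or_ne p t₀ with rfl | hne
            · have hy' : f (p + 1) ∉ C := by
                refine hactN (p + 1) (by omega) (by omega) (fun hc => hcol' ?_)
                have h2 := hc.2
                rw [hvy] at h2
                have hfx2 : f (p + 1 + 1) ≠ x := by
                  intro hh
                  have := hxuniq (p + 1 + 1) (by omega) hh
                  omega
                refine ⟨?_, ?_⟩
                · rw [hg1 (p - 1) (by omega), hg2 p le_rfl, hvy]
                  exact hE1
                · rw [hg2 (p + 1) (by omega), hg2 p le_rfl, hvy]
                  exact (epair _ _ (fun hh => hfx2 hh.1) (fun hh => hxny hh.1.symm)).mpr h2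
              rw [hg2 p le_rfl, hvy]
              rw [hvy] at hy'
              exact hy'
            · rw [hg2 p (by omega)]
              refine hactN (p + 1) (by omega) (by omega) (fun hc => hcol' ?_)
              exact (colAt_congr
                  (by rw [hg2 _ (by omega), show p - 1 + 1 = p + 1 - 1 from by omega])
                  (hg2 _ (by omega)) (by rw [hg2 _ (by omega)])).mpr
                ((hcolgen (p + 1) (by omega) (by omega) (by omega) (by omega)).mpr hc)
      · by_cases h1c : t₀ + 1 < n ∧ G.Edge (f (t₀ + 2)) y ∧ y ∈ C
        · -- Case 1c: y ∈ C a collider via z → y; delete y, reroute through z → x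
          obtain ⟨htn2, hzy, hyC⟩ := h1c
          have hcolgen : ∀ p, 0 < p → p < n → p - 1 ≠ t₀ → p ≠ t₀ →
              (colAt G' f p ↔ colAt G f p) := by
            intro p h0 hn hne1 hne2
            have o1 := hok (p - 1) (by omega) hne1
            have o2 := hok p (by omega) hne2
            rw [show p - 1 + 1 = p from by omega] at o1
            exact hcolc f p (fun h => o1.1 ⟨h.1, h.2⟩) (fun h => o1.2 ⟨h.2, h.1⟩)
              (fun h => o2.1 ⟨h.1, h.2⟩) (fun h => o2.2 ⟨h.2, h.1⟩)
          have hznx : f (t₀ + 2) ≠ x := by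
            intro hh
            have := hxuniq (t₀ + 2) (by omega) hh
            omega
          have hzx : G.Edge (f (t₀ + 2)) x := (hcov.2 _ hznx).mp hzy
          have hE2 : G'.Edge (f (t₀ + 2)) x := rev_edge_of hcov hzx (fun hh => hznx hh.1)
          have hnxz : ¬ G'.Edge x (f (t₀ + 2)) := by
            rintro (⟨h, -⟩ | ⟨h, -⟩)
            · exact G.edge_asymm hzx h
            · exact hxny h
          set g : ℕ → V := fun i => if i < t₀ + 1 then f i else f (i + 1) with hgdef
          have hg1 : ∀ i, i < t₀ + 1 → g i = f i := fun i h => if_pos h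
          have hg2 : ∀ i, t₀ + 1 ≤ i → g i = f (i + 1) := fun i h => if_neg (by omega)
          refine ⟨⟨n - 1, by omega, g, ?_, ?_, ?_, ?_, ?_⟩⟩
          · rw [hg1 0 (by omega)]; exact hfirst
          · rw [hg2 (n - 1) (by omega), show n - 1 + 1 = n from by omega]; exact hlast
          · intro s hs
            rcases Nat.lt_trichotomy (s + 1) (t₀ + 1) with hlt | heq | hgt
            · rw [hg1 s (by omega), hg1 (s + 1) hlt]
              exact (rev_adj hcov).mpr (hadjf s (by omega))
            · rw [hg1 s (by omega), hg2 (s + 1) (by omega),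
                show s + 1 + 1 = t₀ + 2 from by omega, show s = t₀ from by omega, hvx]
              exact Or.inr hE2
            · rw [hg2 s (by omega), hg2 (s + 1) (by omega)]
              exact (rev_adj hcov).mpr (hadjf (s + 1) (by omega))
          · -- actC
            intro p h0 hn hcol'
            rcases Nat.lt_trichotomy p t₀ with hlt | heq | hgt
            · have hcg : colAt G' g p ↔ colAt G' f p :=
                colAt_congr (hg1 _ (by omega)) (hg1 _ (by omega)) (hg1 _ (by omega))
              have hcol : colAt G f p :=
                (hcolgen p h0 (by omega) (by omega) (by omega)).mp (hcg.mp hcol')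
              rw [hg1 p (by omega)]
              rcases rev_an hcov (hactC p h0 (by omega) hcol) with h | ⟨hfx2, -⟩
              · exact h
              · exact absurd (hxuniq p (by omega) hfx2) (by omega)
            · -- p = t₀ : triple (f (t₀ - 1), x, z)
              exfalso
              have ht0 : 0 < t₀ := by omega
              have hnux : ¬ G.Edge (f (t₀ - 1)) x := fun h => h1a ⟨ht0, h⟩
              have h1 := hcol'.1
              rw [hg1 (p - 1) (by omega), hg1 p (by omega), heq, hvx] at h1
              have hu_ny : f (t₀ - 1) ≠ y := by
                intro hh
                have := hyuniq (t₀ - 1) (by omega) hh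
                omega
              exact hnux ((epair _ _ (fun hh => hxny hh.2) (fun hh => hu_ny hh.2)).mp h1)
            · rcases eq_or_ne p (t₀ + 1) with rfl | hne
              · -- p = t₀ + 1 : triple (x, z, ·)
                exfalso
                have h1 := hcol'.1
                rw [hg1 (t₀ + 1 - 1) (by omega), show t₀ + 1 - 1 = t₀ from by omega, hvx,
                  hg2 (t₀ + 1) le_rfl, show t₀ + 1 + 1 = t₀ + 2 from by omega] at h1
                exact hnxz h1
              · -- p > t₀ + 1 : shifted
                have hcg : colAt G' g p ↔ colAt G' f (p + 1) :=
                  colAt_congr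
                    (by rw [hg2 _ (by omega), show p - 1 + 1 = p + 1 - 1 from by omega])
                    (hg2 _ (by omega)) (by rw [hg2 _ (by omega)])
                have hcol : colAt G f (p + 1) :=
                  (hcolgen (p + 1) (by omega) (by omega) (by omega) (by omega)).mp
                    (hcg.mp hcol')
                rw [hg2 p (by omega)]
                rcases rev_an hcov (hactC (p + 1) (by omega) (by omega) hcol) with h | ⟨hfx2, -⟩
                · exact h
                · exact absurd (hxuniq (p + 1) (by omega) hfx2) (by omega)
          · -- actN
            intro p h0 hn hcol'
            rcases Nat.lt_trichotomy p t₀ with hlt | heq | hgt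
            · rw [hg1 p (by omega)]
              refine hactN p h0 (by omega) (fun hc => hcol' ?_)
              exact (colAt_congr (hg1 _ (by omega)) (hg1 _ (by omega)) (hg1 _ (by omega))).mpr
                ((hcolgen p h0 (by omega) (by omega) (by omega)).mpr hc)
            · -- p = t₀
              rw [hg1 p (by omega)]
              refine hactN p h0 (by omega) (fun hc => ?_)
              have h2 := hc.2
              rw [heq, hvy, hvx] at h2
              exact G.edge_asymm hxy h2
            · rcases eq_or_ne p (t₀ + 1) with rfl | hne
              · -- p = t₀ + 1, vertex z
                rw [hg2 (t₀ + 1) le_rfl, show t₀ + 1 + 1 = t₀ + 2 from by omega]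
                refine hactN (t₀ + 2) (by omega) (by omega) (fun hc => ?_)
                have h1 := hc.1
                rw [show t₀ + 2 - 1 = t₀ + 1 from by omega, hvy] at h1
                exact G.edge_asymm hzy h1
              · rw [hg2 p (by omega)]
                refine hactN (p + 1) (by omega) (by omega) (fun hc => hcol' ?_)
                exact (colAt_congr
                    (by rw [hg2 _ (by omega), show p - 1 + 1 = p + 1 - 1 from by omega])
                    (hg2 _ (by omega)) (by rw [hg2 _ (by omega)])).mpr
                  ((hcolgen (p + 1) (by omega) (by omega) (by omega) (by omega)).mpr hc)
        · -- Case 1keep : the walk is still active after reversal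
          have hcolgen : ∀ p, 0 < p → p < n → p - 1 ≠ t₀ → p ≠ t₀ →
              (colAt G' f p ↔ colAt G f p) := by
            intro p h0 hn hne1 hne2
            have o1 := hok (p - 1) (by omega) hne1
            have o2 := hok p (by omega) hne2
            rw [show p - 1 + 1 = p from by omega] at o1
            exact hcolc f p (fun h => o1.1 ⟨h.1, h.2⟩) (fun h => o1.2 ⟨h.2, h.1⟩)
              (fun h => o2.1 ⟨h.1, h.2⟩) (fun h => o2.2 ⟨h.2, h.1⟩)
          refine ⟨⟨n, npos, f, hfirst, hlast,
            fun s hs => (rev_adj hcov).mpr (hadjf s hs), ?_, ?_⟩⟩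
          · -- actC
            intro p h0 hn hcol'
            rcases eq_or_ne p t₀ with rfl | hne1
            · exfalso
              have hnux : ¬ G.Edge (f (p - 1)) x := fun h => h1a ⟨h0, h⟩
              have h1 := hcol'.1
              rw [hvx] at h1
              have hu_ny : f (p - 1) ≠ y := by
                intro hh
                have := hyuniq (p - 1) (by omega) hh
                omega
              exact hnux ((epair _ _ (fun hh => hxny hh.2) (fun hh => hu_ny hh.2)).mp h1)
            · rcases eq_or_ne p (t₀ + 1) with rfl | hne2
              · exfalso
                have h1 := hcol'.1
                rw [show t₀ + 1 - 1 = t₀ from by omega, hvx, hvy] at h1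
                exact rev_not_edge_xy hcov h1
              · have hcol := (hcolgen p h0 hn (by omega) hne1).mp hcol'
                rcases rev_an hcov (hactC p h0 hn hcol) with h | ⟨hfx2, -⟩
                · exact h
                · exact absurd (hxuniq p (by omega) hfx2) hne1
          · -- actN
            intro p h0 hn hcol'
            rcases eq_or_ne p t₀ with rfl | hne1
            · refine hactN p h0 hn (fun hc => ?_)
              have h2 := hc.2
              rw [hvy, hvx] at h2
              exact G.edge_asymm hxy h2
            · rcases eq_or_ne p (t₀ + 1) with rfl | hne2
              · by_cases hyC : y ∈ C
                · have hnzy : ¬ G.Edge (f (t₀ + 2)) y := fun h => h1c ⟨by omega, h, hyC⟩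
                  refine hactN (t₀ + 1) h0 hn (fun hc => ?_)
                  have h2 := hc.2
                  rw [show t₀ + 1 + 1 = t₀ + 2 from by omega, hvy] at h2
                  exact hnzy h2
                · rw [hvy]; exact hyC
              · exact hactN p h0 hn
                  (fun hc => hcol' ((hcolgen p h0 hn (by omega) hne1).mpr hc))
    · -- traversal y ← x at t₀ (walk passes y then x, against the edge x→y)
      have hyuniq : ∀ s, s ≤ n → f s = y → s = t₀ :=
        fun s hs he => hinj s t₀ hs (by omega) (by rw [he, hvy])
      have hxuniq : ∀ s, s ≤ n → f s = x → s = t₀ + 1 :=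
        fun s hs he => hinj s (t₀ + 1) hs (by omega) (by rw [he, hvx])
      have hok : ∀ s, s < n → s ≠ t₀ →
          (¬(f s = x ∧ f (s+1) = y)) ∧ (¬(f s = y ∧ f (s+1) = x)) := by
        intro s hs hst
        constructor
        · rintro ⟨h1, h2⟩
          have e1 := hxuniq s (by omega) h1
          have e2 := hyuniq (s+1) (by omega) h2
          omega
        · rintro ⟨h1, -⟩
          exact hst (hyuniq s (by omega) h1)
      by_cases h2i : t₀ + 1 < n ∧ G.Edge (f (t₀ + 2)) x
      · -- Case 2i: z → x exists; delete x, reroute through z → y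
        obtain ⟨htn2, hzx⟩ := h2i
        have hcolgen : ∀ p, 0 < p → p < n → p - 1 ≠ t₀ → p ≠ t₀ →
            (colAt G' f p ↔ colAt G f p) := by
          intro p h0 hn hne1 hne2
          have o1 := hok (p - 1) (by omega) hne1
          have o2 := hok p (by omega) hne2
          rw [show p - 1 + 1 = p from by omega] at o1
          exact hcolc f p (fun h => o1.1 ⟨h.1, h.2⟩) (fun h => o1.2 ⟨h.2, h.1⟩)
            (fun h => o2.1 ⟨h.1, h.2⟩) (fun h => o2.2 ⟨h.2, h.1⟩)
        have hznx : f (t₀ + 2) ≠ x := G.edge_ne hzx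
        have hzy : G.Edge (f (t₀ + 2)) y := (hcov.2 _ hznx).mpr hzx
        have hE2 : G'.Edge (f (t₀ + 2)) y := rev_edge_of hcov hzy (fun hh => hznx hh.1)
        have hnyz : ¬ G'.Edge y (f (t₀ + 2)) := by
          rintro (⟨h, -⟩ | ⟨-, h⟩)
          · exact G.edge_asymm hzy h
          · exact hznx h
        have hunx : f (t₀ - 1) ≠ x := by
          intro hh
          have := hxuniq (t₀ - 1) (by omega) hh
          omega
        set g : ℕ → V := fun i => if i < t₀ + 1 then f i else f (i + 1) with hgdef
        have hg1 : ∀ i, i < t₀ + 1 → g i = f i := fun i h => if_pos h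
        have hg2 : ∀ i, t₀ + 1 ≤ i → g i = f (i + 1) := fun i h => if_neg (by omega)
        refine ⟨⟨n - 1, by omega, g, ?_, ?_, ?_, ?_, ?_⟩⟩
        · rw [hg1 0 (by omega)]; exact hfirst
        · rw [hg2 (n - 1) (by omega), show n - 1 + 1 = n from by omega]; exact hlast
        · intro s hs
          rcases Nat.lt_trichotomy (s + 1) (t₀ + 1) with hlt | heq | hgt
          · rw [hg1 s (by omega), hg1 (s + 1) hlt]
            exact (rev_adj hcov).mpr (hadjf s (by omega))
          · rw [hg1 s (by omega), hg2 (s + 1) (by omega),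
              show s + 1 + 1 = t₀ + 2 from by omega, show s = t₀ from by omega, hvy]
            exact Or.inr hE2
          · rw [hg2 s (by omega), hg2 (s + 1) (by omega)]
            exact (rev_adj hcov).mpr (hadjf (s + 1) (by omega))
        · -- actC
          intro p h0 hn hcol'
          rcases Nat.lt_trichotomy p t₀ with hlt | heq | hgt
          · have hcg : colAt G' g p ↔ colAt G' f p :=
              colAt_congr (hg1 _ (by omega)) (hg1 _ (by omega)) (hg1 _ (by omega))
            have hcol : colAt G f p :=
              (hcolgen p h0 (by omega) (by omega) (by omega)).mp (hcg.mp hcol')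
            rw [hg1 p (by omega)]
            rcases rev_an hcov (hactC p h0 (by omega) hcol) with h | ⟨hfx2, -⟩
            · exact h
            · have := hxuniq p (by omega) hfx2
              omega
          · subst heq
            have h1 := hcol'.1
            rw [hg1 (p - 1) (by omega), hg1 p (by omega), hvy] at h1
            have huy : G.Edge (f (p - 1)) y :=
              (epair _ _ (fun hh => hunx hh.1) (fun hh => hxny hh.1.symm)).mp h1
            have hcol : colAt G f p := by
              constructor
              · rw [hvy]; exact huy
              · rw [hvx, hvy]; exact hxy
            rw [hg1 p (by omega)]
            rcases rev_an hcov (hactC p h0 (by omega) hcol) with h | ⟨hfx2, -⟩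
            · exact h
            · have := hxuniq p (by omega) hfx2
              omega
          · rcases eq_or_ne p (t₀ + 1) with rfl | hne
            · exfalso
              have h1 := hcol'.1
              rw [hg1 (t₀ + 1 - 1) (by omega), show t₀ + 1 - 1 = t₀ from by omega, hvy,
                hg2 (t₀ + 1) le_rfl, show t₀ + 1 + 1 = t₀ + 2 from by omega] at h1
              exact hnyz h1
            · have hcg : colAt G' g p ↔ colAt G' f (p + 1) :=
                colAt_congr
                  (by rw [hg2 _ (by omega), show p - 1 + 1 = p + 1 - 1 from by omega])
                  (hg2 _ (by omega)) (by rw [hg2 _ (by omega)])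
              have hcol : colAt G f (p + 1) :=
                (hcolgen (p + 1) (by omega) (by omega) (by omega) (by omega)).mp
                  (hcg.mp hcol')
              rw [hg2 p (by omega)]
              rcases rev_an hcov (hactC (p + 1) (by omega) (by omega) hcol) with h | ⟨hfx2, -⟩
              · exact h
              · have := hxuniq (p + 1) (by omega) hfx2
                omega
        · -- actN
          intro p h0 hn hcol'
          rcases Nat.lt_trichotomy p t₀ with hlt | heq | hgt
          · rw [hg1 p (by omega)]
            refine hactN p h0 (by omega) (fun hc => hcol' ?_)
            exact (colAt_congr (hg1 _ (by omega)) (hg1 _ (by omega)) (hg1 _ (by omega))).mpr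
              ((hcolgen p h0 (by omega) (by omega) (by omega)).mpr hc)
          · subst heq
            rw [hg1 p (by omega)]
            refine hactN p h0 (by omega) (fun hc => hcol' ?_)
            have h1 := hc.1
            rw [hvy] at h1
            have huy' : G'.Edge (f (p - 1)) y := rev_edge_of hcov h1 (fun hh => hunx hh.1)
            constructor
            · rw [hg1 (p - 1) (by omega), hg1 p (by omega), hvy]
              exact huy'
            · rw [hg2 (p + 1) le_rfl, show p + 1 + 1 = p + 2 from by omega,
                hg1 p (by omega), hvy]
              exact hE2
          · rcases eq_or_ne p (t₀ + 1) with rfl | hne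
            · rw [hg2 (t₀ + 1) le_rfl, show t₀ + 1 + 1 = t₀ + 2 from by omega]
              refine hactN (t₀ + 2) (by omega) (by omega) (fun hc => ?_)
              have h1 := hc.1
              rw [show t₀ + 2 - 1 = t₀ + 1 from by omega, hvx] at h1
              exact G.edge_asymm hzx h1
            · rw [hg2 p (by omega)]
              refine hactN (p + 1) (by omega) (by omega) (fun hc => hcol' ?_)
              exact (colAt_congr
                  (by rw [hg2 _ (by omega), show p - 1 + 1 = p + 1 - 1 from by omega])
                  (hg2 _ (by omega)) (by rw [hg2 _ (by omega)])).mpr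
                ((hcolgen (p + 1) (by omega) (by omega) (by omega) (by omega)).mpr hc)
      · by_cases h2iii : 0 < t₀ ∧ G.Edge (f (t₀ - 1)) y ∧ y ∈ C
        · -- Case 2iii: y ∈ C collider via u → y; delete y, reroute through u → x
          obtain ⟨ht0, huy, hyC⟩ := h2iii
          have hcolgen : ∀ p, 0 < p → p < n → p - 1 ≠ t₀ → p ≠ t₀ →
              (colAt G' f p ↔ colAt G f p) := by
            intro p h0 hn hne1 hne2
            have o1 := hok (p - 1) (by omega) hne1
            have o2 := hok p (by omega) hne2
            rw [show p - 1 + 1 = p from by omega] at o1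
            exact hcolc f p (fun h => o1.1 ⟨h.1, h.2⟩) (fun h => o1.2 ⟨h.2, h.1⟩)
              (fun h => o2.1 ⟨h.1, h.2⟩) (fun h => o2.2 ⟨h.2, h.1⟩)
          have hunx : f (t₀ - 1) ≠ x := by
            intro hh
            have := hxuniq (t₀ - 1) (by omega) hh
            omega
          have hu_x : G.Edge (f (t₀ - 1)) x := (hcov.2 _ hunx).mp huy
          have hE1 : G'.Edge (f (t₀ - 1)) x := rev_edge_of hcov hu_x (fun hh => hunx hh.1)
          have hnxu : ¬ G'.Edge x (f (t₀ - 1)) := by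
            rintro (⟨h, -⟩ | ⟨h, -⟩)
            · exact G.edge_asymm hu_x h
            · exact hxny h
          set g : ℕ → V := fun i => if i < t₀ then f i else f (i + 1) with hgdef
          have hg1 : ∀ i, i < t₀ → g i = f i := fun i h => if_pos h
          have hg2 : ∀ i, t₀ ≤ i → g i = f (i + 1) := fun i h => if_neg (by omega)
          refine ⟨⟨n - 1, by omega, g, ?_, ?_, ?_, ?_, ?_⟩⟩
          · rw [hg1 0 (by omega)]; exact hfirst
          · rw [hg2 (n - 1) (by omega), show n - 1 + 1 = n from by omega]; exact hlast
          · intro s hs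
            rcases Nat.lt_trichotomy (s + 1) t₀ with hlt | heq | hgt
            · rw [hg1 s (by omega), hg1 (s + 1) hlt]
              exact (rev_adj hcov).mpr (hadjf s (by omega))
            · rw [hg1 s (by omega), hg2 (s + 1) (by omega),
                show s + 1 + 1 = t₀ + 1 from by omega, hvx, show s = t₀ - 1 from by omega]
              exact Or.inl hE1
            · rw [hg2 s (by omega), hg2 (s + 1) (by omega)]
              exact (rev_adj hcov).mpr (hadjf (s + 1) (by omega))
          · -- actC
            intro p h0 hn hcol'
            rcases Nat.lt_trichotomy (p + 1) t₀ with hlt | heq | hgt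
            · have hcg : colAt G' g p ↔ colAt G' f p :=
                colAt_congr (hg1 _ (by omega)) (hg1 _ (by omega)) (hg1 _ (by omega))
              have hcol : colAt G f p :=
                (hcolgen p h0 (by omega) (by omega) (by omega)).mp (hcg.mp hcol')
              rw [hg1 p (by omega)]
              rcases rev_an hcov (hactC p h0 (by omega) hcol) with h | ⟨hfx2, -⟩
              · exact h
              · have := hxuniq p (by omega) hfx2
                omega
            · exfalso
              have h2 := hcol'.2
              rw [hg2 (p + 1) (by omega), show p + 1 + 1 = t₀ + 1 from by omega, hvx,
                hg1 p (by omega), show p = t₀ - 1 from by omega] at h2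
              exact hnxu h2
            · rcases eq_or_ne p t₀ with rfl | hne
              · exfalso
                have h2 := hcol'.2
                rw [hg2 (p + 1) (by omega), show p + 1 + 1 = p + 2 from by omega,
                  hg2 p le_rfl, hvx] at h2
                have hnzx : ¬ G.Edge (f (p + 2)) x := fun h => h2i ⟨by omega, h⟩
                have hzny : f (p + 2) ≠ y := by
                  intro hh
                  have := hyuniq (p + 2) (by omega) hh
                  omega
                exact hnzx
                  ((epair _ _ (fun hh => hxny hh.2) (fun hh => hzny hh.2)).mp h2)
              · have hcg : colAt G' g p ↔ colAt G' f (p + 1) :=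
                  colAt_congr
                    (by rw [hg2 _ (by omega), show p - 1 + 1 = p + 1 - 1 from by omega])
                    (hg2 _ (by omega)) (by rw [hg2 _ (by omega)])
                have hcol : colAt G f (p + 1) :=
                  (hcolgen (p + 1) (by omega) (by omega) (by omega) (by omega)).mp
                    (hcg.mp hcol')
                rw [hg2 p (by omega)]
                rcases rev_an hcov (hactC (p + 1) (by omega) (by omega) hcol) with
                  h | ⟨hfx2, -⟩
                · exact h
                · have := hxuniq (p + 1) (by omega) hfx2
                  omega
          · -- actN
            intro p h0 hn hcol'
            rcases Nat.lt_trichotomy (p + 1) t₀ with hlt | heq | hgt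
            · rw [hg1 p (by omega)]
              refine hactN p h0 (by omega) (fun hc => hcol' ?_)
              exact (colAt_congr (hg1 _ (by omega)) (hg1 _ (by omega)) (hg1 _ (by omega))).mpr
                ((hcolgen p h0 (by omega) (by omega) (by omega)).mpr hc)
            · rw [hg1 p (by omega)]
              refine hactN p h0 (by omega) (fun hc => ?_)
              have h2 := hc.2
              rw [heq, hvy, show p = t₀ - 1 from by omega] at h2
              exact G.edge_asymm huy h2
            · rcases eq_or_ne p t₀ with rfl | hne
              · rw [hg2 p le_rfl]
                refine hactN (p + 1) (by omega) (by omega) (fun hc => ?_)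
                have h1 := hc.1
                rw [show p + 1 - 1 = p from by omega, hvy, hvx] at h1
                exact G.edge_asymm hxy h1
              · rw [hg2 p (by omega)]
                refine hactN (p + 1) (by omega) (by omega) (fun hc => hcol' ?_)
                exact (colAt_congr
                    (by rw [hg2 _ (by omega), show p - 1 + 1 = p + 1 - 1 from by omega])
                    (hg2 _ (by omega)) (by rw [hg2 _ (by omega)])).mpr
                  ((hcolgen (p + 1) (by omega) (by omega) (by omega) (by omega)).mpr hc)
        · -- Case 2keep
          have hcolgen : ∀ p, 0 < p → p < n → p - 1 ≠ t₀ → p ≠ t₀ →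
              (colAt G' f p ↔ colAt G f p) := by
            intro p h0 hn hne1 hne2
            have o1 := hok (p - 1) (by omega) hne1
            have o2 := hok p (by omega) hne2
            rw [show p - 1 + 1 = p from by omega] at o1
            exact hcolc f p (fun h => o1.1 ⟨h.1, h.2⟩) (fun h => o1.2 ⟨h.2, h.1⟩)
              (fun h => o2.1 ⟨h.1, h.2⟩) (fun h => o2.2 ⟨h.2, h.1⟩)
          refine ⟨⟨n, npos, f, hfirst, hlast,
            fun s hs => (rev_adj hcov).mpr (hadjf s hs), ?_, ?_⟩⟩
          · -- actC
            intro p h0 hn hcol'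
            rcases eq_or_ne p t₀ with rfl | hne1
            · exfalso
              have h2 := hcol'.2
              rw [hvx, hvy] at h2
              exact rev_not_edge_xy hcov h2
            · rcases eq_or_ne p (t₀ + 1) with rfl | hne2
              · exfalso
                have h2 := hcol'.2
                rw [hvx, show t₀ + 1 + 1 = t₀ + 2 from by omega] at h2
                have hnzx : ¬ G.Edge (f (t₀ + 2)) x := fun h => h2i ⟨by omega, h⟩
                have hzny : f (t₀ + 2) ≠ y := by
                  intro hh
                  have := hyuniq (t₀ + 2) (by omega) hh
                  omega
                exact hnzx
                  ((epair _ _ (fun hh => hxny hh.2) (fun hh => hzny hh.2)).mp h2)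
              · have hcol := (hcolgen p h0 hn (by omega) hne1).mp hcol'
                rcases rev_an hcov (hactC p h0 hn hcol) with h | ⟨hfx2, -⟩
                · exact h
                · have := hxuniq p (by omega) hfx2
                  omega
          · -- actN
            intro p h0 hn hcol'
            rcases eq_or_ne p t₀ with rfl | hne1
            · by_cases hyC : y ∈ C
              · have hnuy : ¬ G.Edge (f (p - 1)) y := fun h => h2iii ⟨h0, h, hyC⟩
                refine hactN p h0 hn (fun hc => ?_)
                have h1 := hc.1
                rw [hvy] at h1
                exact hnuy h1
              · rw [hvy]; exact hyC
            · rcases eq_or_ne p (t₀ + 1) with rfl | hne2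
              · refine hactN (t₀ + 1) h0 hn (fun hc => ?_)
                have h1 := hc.1
                rw [show t₀ + 1 - 1 = t₀ from by omega, hvy, hvx] at h1
                exact G.edge_asymm hxy h1
              · exact hactN p h0 hn
                  (fun hc => hcol' ((hcolgen p h0 hn (by omega) hne1).mpr hc))
  · -- no traversal of the edge x—y
    push_neg at hT
    have hok : ∀ s, s < n → (¬(f s = x ∧ f (s+1) = y)) ∧ (¬(f s = y ∧ f (s+1) = x)) := by
      intro s hs
      have := hT s hs
      tauto
    have hcolgen : ∀ p, 0 < p → p < n → (colAt G' f p ↔ colAt G f p) := by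
      intro p h0 hn
      have o1 := hok (p-1) (by omega)
      have o2 := hok p (by omega)
      rw [show p - 1 + 1 = p from by omega] at o1
      exact hcolc f p
        (fun h => o1.1 ⟨h.1, h.2⟩) (fun h => o1.2 ⟨h.2, h.1⟩)
        (fun h => o2.1 ⟨h.1, h.2⟩) (fun h => o2.2 ⟨h.2, h.1⟩)
    by_cases hX : ∃ t, 0 < t ∧ t < n ∧ f t = x ∧ colAt G f t ∧ f t ∉ C ∪ G'.ancestors C
    · obtain ⟨t₀, ht0, htn, hfx, hcolx, hnotin⟩ := hX
      have hymem : y ∈ C ∪ G'.ancestors C := by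
        rcases rev_an hcov (hactC t₀ ht0 htn hcolx) with h | ⟨-, h⟩
        · exact absurd h hnotin
        · exact h
      have hux : G.Edge (f (t₀ - 1)) x := by rw [← hfx]; exact hcolx.1
      have hwx : G.Edge (f (t₀ + 1)) x := by rw [← hfx]; exact hcolx.2
      have hunx : f (t₀ - 1) ≠ x := G.edge_ne hux
      have hwnx : f (t₀ + 1) ≠ x := G.edge_ne hwx
      have huy : G.Edge (f (t₀ - 1)) y := (hcov.2 _ hunx).mpr hux
      have hwy : G.Edge (f (t₀ + 1)) y := (hcov.2 _ hwnx).mpr hwx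
      have hE1 : G'.Edge (f (t₀ - 1)) y := rev_edge_of hcov huy (fun h => hunx h.1)
      have hE2 : G'.Edge (f (t₀ + 1)) y := rev_edge_of hcov hwy (fun h => hwnx h.1)
      have hnyu : ¬ G'.Edge y (f (t₀ - 1)) := by
        rintro (⟨h, -⟩ | ⟨-, h⟩)
        · exact G.acyclic x (((TransGen.single hxy).trans (TransGen.single h)).trans
            (TransGen.single hux))
        · exact hunx h
      have hnyw : ¬ G'.Edge y (f (t₀ + 1)) := by
        rintro (⟨h, -⟩ | ⟨-, h⟩)
        · exact G.acyclic x (((TransGen.single hxy).trans (TransGen.single h)).trans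
            (TransGen.single hwx))
        · exact hwnx h
      set g : ℕ → V := fun i => if i = t₀ then y else f i with hgdef
      have hgt : g t₀ = y := if_pos rfl
      have hgo : ∀ i, i ≠ t₀ → g i = f i := fun i h => if_neg h
      refine ⟨⟨n, npos, g, ?_, ?_, ?_, ?_, ?_⟩⟩
      · rw [hgo 0 (by omega)]; exact hfirst
      · rw [hgo n (by omega)]; exact hlast
      · intro s hs
        rcases eq_or_ne s t₀ with rfl | hs1
        · rw [hgt, hgo (s + 1) (by omega)]
          exact Or.inr hE2
        · rcases eq_or_ne (s + 1) t₀ with he | hs2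
          · rw [hgo s hs1, he, hgt, show s = t₀ - 1 from by omega]
            exact Or.inl hE1
          · rw [hgo s hs1, hgo (s + 1) hs2]
            exact (rev_adj hcov).mpr (hadjf s hs)
      · -- actC
        intro p h0 hn hcol'
        rcases eq_or_ne p t₀ with rfl | hp
        · rw [hgt]; exact hymem
        · rcases eq_or_ne (p + 1) t₀ with he | hp2
          · exfalso
            have h2 := hcol'.2
            rw [he, hgt, hgo p hp, show p = t₀ - 1 from by omega] at h2
            exact hnyu h2
          · rcases eq_or_ne p (t₀ + 1) with rfl | hp3
            · exfalso
              have h1 := hcol'.1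
              rw [show t₀ + 1 - 1 = t₀ from by omega, hgt, hgo (t₀ + 1) (by omega)] at h1
              exact hnyw h1
            · have hcg : colAt G' g p ↔ colAt G' f p :=
                colAt_congr (hgo _ (by omega)) (hgo _ hp) (hgo _ hp2)
              have hcol : colAt G f p := (hcolgen p h0 hn).mp (hcg.mp hcol')
              rw [hgo p hp]
              rcases rev_an hcov (hactC p h0 hn hcol) with h | ⟨hfx2, -⟩
              · exact h
              · exact absurd (hinj p t₀ (by omega) (by omega) (by rw [hfx2, hfx])) hp
      · -- actN
        intro p h0 hn hcol'
        rcases eq_or_ne p t₀ with rfl | hp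
        · exfalso
          refine hcol' ⟨?_, ?_⟩
          · rw [hgo (p - 1) (by omega), hgt]; exact hE1
          · rw [hgo (p + 1) (by omega), hgt]; exact hE2
        · rcases eq_or_ne (p + 1) t₀ with he | hp2
          · rw [hgo p hp]
            refine hactN p h0 hn (fun hc => ?_)
            have h2 := hc.2
            rw [he, hfx] at h2
            rw [show p = t₀ - 1 from by omega] at h2
            exact G.edge_asymm hux h2
          · rcases eq_or_ne p (t₀ + 1) with rfl | hp3
            · rw [hgo (t₀ + 1) (by omega)]
              refine hactN _ h0 hn (fun hc => ?_)
              have h1 := hc.1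
              rw [show t₀ + 1 - 1 = t₀ from by omega, hfx] at h1
              exact G.edge_asymm hwx h1
            · rw [hgo p hp]
              refine hactN p h0 hn (fun hc => hcol' ?_)
              exact (colAt_congr (hgo _ (by omega)) (hgo _ hp) (hgo _ hp2)).mpr
                ((hcolgen p h0 hn).mpr hc)
    · refine ⟨⟨n, npos, f, hfirst, hlast,
        fun s hs => (rev_adj hcov).mpr (hadjf s hs), ?_, ?_⟩⟩
      · intro p h0 hn hcol'
        have hcol : colAt G f p := (hcolgen p h0 hn).mp hcol'
        rcases rev_an hcov (hactC p h0 hn hcol) with h | ⟨hfx, -⟩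
        · exact h
        · by_cases hin : f p ∈ C ∪ G'.ancestors C
          · exact hin
          · exact absurd ⟨p, h0, hn, hfx, hcol, hin⟩ hX
      · intro p h0 hn hcol'
        exact hactN p h0 hn (fun h => hcol' ((hcolgen p h0 hn).mpr h))

end Surgery


section Equivalence

open Relation

lemma MarkovEquiv.symm {G₁ G₂ : DAG V} (h : G₁.MarkovEquiv G₂) : G₂.MarkovEquiv G₁ :=
  fun A B C d1 d2 d3 => (h A B C d1 d2 d3).symm

lemma MarkovEquiv.trans {G₁ G₂ G₃ : DAG V} (h1 : G₁.MarkovEquiv G₂)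
    (h2 : G₂.MarkovEquiv G₃) : G₁.MarkovEquiv G₃ :=
  fun A B C d1 d2 d3 => (h1 A B C d1 d2 d3).trans (h2 A B C d1 d2 d3)

lemma rev_not_dsep {G : DAG V} {x y : V} (hcov : CoveredEdge G x y) {A B C : Set V}
    (hAB : Disjoint A B) (h : ¬ G.dSep A B C) : ¬ (revDAG G x y hcov).dSep A B C := by
  simp only [dSep] at h
  push_neg at h
  obtain ⟨a, ha, b, hb, π, hπ⟩ := h
  have hab : a ≠ b := fun he => (Set.disjoint_left.mp hAB ha) (he ▸ hb)
  have hinj : ∀ s t : ℕ, s ≤ π.n → t ≤ π.n → π.nf s = π.nf t → s = t := by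
    intro s t hs ht hfe
    have h1 : π.f ⟨s, Nat.lt_succ_of_le hs⟩ = π.f ⟨t, Nat.lt_succ_of_le ht⟩ := by
      rw [← π.nf_eq hs, ← π.nf_eq ht]; exact hfe
    exact congrArg Fin.val (π.inj h1)
  obtain ⟨W⟩ := rev_surgery hcov π.n π.npos π.nf π.nf_first π.nf_last
    (fun t ht => π.nf_adj ht) (AWalk.ofPath π hπ).actC (AWalk.ofPath π hπ).actN hinj
  obtain ⟨π', hπ'⟩ := W.toPath hab
  intro hsep
  exact hπ' (hsep a ha b hb π')

lemma rev_markovEquiv {G : DAG V} {x y : V} (hcov : CoveredEdge G x y) :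
    G.MarkovEquiv (revDAG G x y hcov) := by
  intro A B C hAB _ _
  constructor
  · intro h
    by_contra h'
    have h2 := rev_not_dsep (rev_covered hcov) hAB h'
    exact h2 (dSep_congr (fun u v => (revrev_edge hcov (u := u) (v := v)).symm) h)
  · intro h
    by_contra h'
    exact rev_not_dsep hcov hAB h' h

open scoped Classical in
lemma chickering_aux [Fintype V] : ∀ N : ℕ, ∀ G₁ G₂ : DAG V,
    (∀ u v, G₁.Adj u v ↔ G₂.Adj u v) →
    (∀ i k j, G₁.IsCollider i k j ↔ G₂.IsCollider i k j) →
    (Finset.univ.filter fun p : V × V => G₁.Edge p.1 p.2 ∧ ¬ G₂.Edge p.1 p.2).card = N →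
    G₁.MarkovEquiv G₂ := by
  intro N
  induction N using Nat.strong_induction_on with
  | _ N ih =>
    intro G₁ G₂ hsk hcol hcard
    by_cases hΔ : ∀ u v, G₁.Edge u v → G₂.Edge u v
    · refine markovEquiv_of_edge_iff (fun u v => ⟨hΔ u v, fun h => ?_⟩)
      rcases (hsk u v).2 (Or.inl h) with h' | h'
      · exact h'
      · exact absurd (hΔ v u h') (G₂.edge_asymm h)
    · push_neg at hΔ
      have hwf : WellFounded (TransGen G₁.Edge) := by
        have h1 : IsTrans V (TransGen G₁.Edge) := ⟨fun a b c => TransGen.trans⟩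
        have h2 : IsIrrefl V (TransGen G₁.Edge) := ⟨G₁.acyclic⟩
        exact Finite.wellFounded_of_trans_of_irrefl _
      have hwf' : WellFounded (fun a b : V => TransGen G₁.Edge b a) := by
        have h1 : IsTrans V (fun a b : V => TransGen G₁.Edge b a) :=
          ⟨fun a b c h1 h2 => TransGen.trans h2 h1⟩
        have h2 : IsIrrefl V (fun a b : V => TransGen G₁.Edge b a) := ⟨G₁.acyclic⟩
        exact Finite.wellFounded_of_trans_of_irrefl _
      obtain ⟨u₁, v₁, he1, he2⟩ := hΔ
      obtain ⟨y₀, hy₀mem, hy₀min⟩ := hwf.has_min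
        {v | ∃ u, G₁.Edge u v ∧ ¬ G₂.Edge u v} ⟨v₁, u₁, he1, he2⟩
      obtain ⟨x₀, hx₀mem, hx₀max⟩ := hwf'.has_min
        {u | G₁.Edge u y₀ ∧ ¬ G₂.Edge u y₀} hy₀mem
      obtain ⟨hE1, hnE2⟩ := hx₀mem
      have hE2' : G₂.Edge y₀ x₀ := by
        rcases (hsk x₀ y₀).1 (Or.inl hE1) with h | h
        · exact absurd h hnE2
        · exact h
      have hcov : CoveredEdge G₁ x₀ y₀ := by
        refine ⟨hE1, fun z hz => ?_⟩
        by_cases hzy : G₁.Edge z y₀ <;> by_cases hzx : G₁.Edge z x₀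
        · exact iff_of_true hzy hzx
        · -- Case B : z ∈ pa₁(y₀) \ pa₁(x₀)
          exfalso
          have hzney : z ≠ y₀ := G₁.edge_ne hzy
          by_cases hadj : G₁.Adj x₀ z
          · have hxz : G₁.Edge x₀ z := hadj.resolve_right hzx
            rcases (hsk z y₀).1 (Or.inl hzy) with hzy2 | hyz2
            · -- B2
              have hnx₀z2 : ¬ G₂.Edge x₀ z := fun hx₀z2 =>
                G₂.acyclic y₀ (((TransGen.single hE2').trans (TransGen.single hx₀z2)).trans
                  (TransGen.single hzy2))
              exact absurd (TransGen.single hzy)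
                (hy₀min z ⟨x₀, hxz, hnx₀z2⟩)
            · -- B1
              exact absurd (TransGen.single hxz)
                (hx₀max z ⟨hzy, fun h => G₂.edge_asymm hyz2 h⟩)
          · -- unshielded collider x₀ → y₀ ← z in G₁
            have hvc : G₁.IsCollider x₀ y₀ z :=
              ⟨⟨fun h => hz h.symm, G₁.edge_ne hE1, hzney, Or.inl hE1, Or.inl hzy, hadj⟩,
                hE1, hzy⟩
            exact G₂.edge_asymm ((hcol x₀ y₀ z).1 hvc).2.1 hE2'
        · -- Case A : z ∈ pa₁(x₀) \ pa₁(y₀)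
          exfalso
          have hzney : z ≠ y₀ := by
            rintro rfl
            exact G₁.edge_asymm hE1 hzx
          have hnadj : ¬ G₁.Adj z y₀ := by
            rintro (h | h)
            · exact hzy h
            · exact G₁.acyclic y₀ (((TransGen.single h).trans (TransGen.single hzx)).trans
                (TransGen.single hE1))
          by_cases hz2 : G₂.Edge z x₀
          · have hic2 : G₂.IsCollider z x₀ y₀ :=
              ⟨⟨hzney, hz, (G₁.edge_ne hE1).symm, (hsk z x₀).1 (Or.inl hzx), Or.inl hE2',
                fun h => hnadj ((hsk z y₀).2 h)⟩, hz2, hE2'⟩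
            exact G₁.edge_asymm hE1 ((hcol z x₀ y₀).2 hic2).2.2
          · exact absurd (TransGen.single hE1) (hy₀min x₀ ⟨z, hzx, hz2⟩)
        · exact iff_of_false hzy hzx
      -- reverse the covered edge and recurse
      have hsk' : ∀ u v, (revDAG G₁ x₀ y₀ hcov).Adj u v ↔ G₂.Adj u v :=
        fun u v => (rev_adj hcov).trans (hsk u v)
      have hcol' : ∀ i k j, (revDAG G₁ x₀ y₀ hcov).IsCollider i k j ↔ G₂.IsCollider i k j :=
        fun i k j => (rev_isCollider_iff hcov).trans (hcol i k j)
      have hmem : (x₀, y₀) ∈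
          Finset.univ.filter (fun p : V × V => G₁.Edge p.1 p.2 ∧ ¬ G₂.Edge p.1 p.2) := by
        simp only [Finset.mem_filter, Finset.mem_univ, true_and]
        exact ⟨hE1, hnE2⟩
      have hS' : (Finset.univ.filter
            fun p : V × V => (revDAG G₁ x₀ y₀ hcov).Edge p.1 p.2 ∧ ¬ G₂.Edge p.1 p.2) =
          (Finset.univ.filter
            fun p : V × V => G₁.Edge p.1 p.2 ∧ ¬ G₂.Edge p.1 p.2).erase (x₀, y₀) := by
        ext ⟨u, v⟩
        simp only [Finset.mem_filter, Finset.mem_univ, true_and, Finset.mem_erase]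
        constructor
        · rintro ⟨he', hn2⟩
          rcases he' with ⟨he, hne⟩ | ⟨rfl, rfl⟩
          · refine ⟨?_, he, hn2⟩
            intro hp
            apply hne
            rw [Prod.ext_iff] at hp
            exact ⟨hp.1, hp.2⟩
          · exact absurd hE2' hn2
        · rintro ⟨hpne, he, hn2⟩
          refine ⟨rev_edge_of hcov he ?_, hn2⟩
          rintro ⟨rfl, rfl⟩
          exact hpne rfl
      have hN : 0 < N := by
        rw [← hcard]
        exact Finset.card_pos.mpr ⟨(x₀, y₀), hmem⟩
      have hcard2 : (Finset.univ.filter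
          fun p : V × V => (revDAG G₁ x₀ y₀ hcov).Edge p.1 p.2 ∧ ¬ G₂.Edge p.1 p.2).card =
          N - 1 := by
        rw [hS', Finset.card_erase_of_mem hmem, hcard]
      exact (rev_markovEquiv hcov).trans
        (ih (N - 1) (by omega) (revDAG G₁ x₀ y₀ hcov) G₂ hsk' hcol' hcard2)

/-- Verma–Pearl: DAGs with the same skeleton and the same colliders are Markov
equivalent. -/
theorem markovEquiv_of_same_skel_colliders [Fintype V] {G₁ G₂ : DAG V}
    (hsk : ∀ u v, G₁.Adj u v ↔ G₂.Adj u v)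
    (hcol : ∀ i k j, G₁.IsCollider i k j ↔ G₂.IsCollider i k j) :
    G₁.MarkovEquiv G₂ := by
  classical
  exact chickering_aux _ G₁ G₂ hsk hcol rfl

end Equivalence


end DAG

end Aux

section RuleEquiv

open MeasureTheory

variable {V : Type*} {Ω : Type*} [MeasurableSpace Ω] [StandardBorelSpace Ω] [Nonempty Ω]
  {E : V → Type*} [∀ i, MeasurableSpace (E i)]
  (μ : Measure Ω) [IsFiniteMeasure μ] (X : ∀ i, Ω → E i) (hX : ∀ i, Measurable (X i))

lemma vconfigRel_of_vconfig {G : DAG V} (hskel : SkelEq μ X hX G) {i k j : V}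
    (h : G.VConfig i k j) : VConfigRel (SkP μ X hX) i k j :=
  ⟨h.1, h.2.1, h.2.2.1, (hskel i k).1 h.2.2.2.1, (hskel j k).1 h.2.2.2.2.1,
    fun hh => h.2.2.2.2.2 ((hskel i j).2 hh)⟩

lemma vconfig_of_vconfigRel {G : DAG V} (hskel : SkelEq μ X hX G) {i k j : V}
    (h : VConfigRel (SkP μ X hX) i k j) : G.VConfig i k j :=
  ⟨h.1, h.2.1, h.2.2.1, (hskel i k).2 h.2.2.2.1, (hskel j k).2 h.2.2.2.2.1,
    fun hh => h.2.2.2.2.2 ((hskel i j).1 hh)⟩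

lemma satisfiesRule_iff (G : DAG V) :
    SatisfiesRule μ X hX G ↔
      (SkelEq μ X hX G ∧ VOUS μ X hX G ∧ ColliderStable μ X hX G) := by
  constructor
  · rintro ⟨hskel, hcolr, hncolr⟩
    refine ⟨hskel, ?_, ?_⟩
    · intro i k j hnc C hC hCI
      by_contra hnCI
      have hac : AssignedCollider μ X hX i k j :=
        ⟨vconfigRel_of_vconfig μ X hX hskel hnc.1, C, hC, hCI, hnCI⟩
      exact hnc.2 ⟨(hcolr i k j hac).2.1, (hcolr i k j hac).2.2⟩
    · intro i k j hc
      by_contra hne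
      push_neg at hne
      have hanc : AssignedNonCollider μ X hX i k j := by
        refine ⟨vconfigRel_of_vconfig μ X hX hskel hc.1, fun C hC hCI => ?_⟩
        by_contra hk
        refine hne C ?_ hCI
        intro c hcC hmem
        simp only [Set.mem_insert_iff, Set.mem_singleton_iff] at hmem
        rcases hmem with rfl | rfl | rfl
        · exact hC hcC (by simp)
        · exact hC hcC (by simp)
        · exact hk hcC
      exact (hncolr i k j hanc).2 ⟨hc.2.1, hc.2.2⟩
  · rintro ⟨hskel, hvous, hcs⟩
    refine ⟨hskel, ?_, ?_⟩
    · rintro i k j ⟨hvr, C, hC, h1, h2⟩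
      have hvc := vconfig_of_vconfigRel μ X hX hskel hvr
      by_contra hnotcol
      have hnc : G.IsNonCollider i k j := ⟨hvc, fun hee => hnotcol ⟨hvc, hee.1, hee.2⟩⟩
      exact h2 (hvous i k j hnc C hC h1)
    · rintro i k j ⟨hvr, hall⟩
      have hvc := vconfig_of_vconfigRel μ X hX hskel hvr
      by_contra hnotnc
      have hee : G.Edge i k ∧ G.Edge j k := by
        by_contra hne
        exact hnotnc ⟨hvc, hne⟩
      obtain ⟨C, hC, hCI⟩ := hcs i k j ⟨hvc, hee.1, hee.2⟩
      have hsub : C ⊆ ({i, j} : Set V)ᶜ := by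
        intro c hcC hmem
        refine hC hcC ?_
        simp only [Set.mem_insert_iff, Set.mem_singleton_iff] at hmem ⊢
        tauto
      exact hC (hall C hsub hCI) (by simp)

end RuleEquiv



variable {V : Type*} [Fintype V] {Ω : Type*} [MeasurableSpace Ω] [StandardBorelSpace Ω]
  [Nonempty Ω] {E : V → Type*} [∀ i, MeasurableSpace (E i)]
  (μ : MeasureTheory.Measure Ω) [MeasureTheory.IsProbabilityMeasure μ]
  (X : ∀ i, Ω → E i) (hX : ∀ i, Measurable (X i))

/-- Any two DAGs satisfying the V-OUS and collider-stable orientation rule wrt `P` have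
exactly the same collider v-configurations, iff any two DAGs `G` with `sk(G) = sk(P)`
such that `P` is V-OUS and collider-stable wrt `G` are Markov equivalent. -/
theorem stmt_3 :
    (∀ G₁ G₂ : DAG V, SatisfiesRule μ X hX G₁ → SatisfiesRule μ X hX G₂ →
        ∀ i k j : V, G₁.IsCollider i k j ↔ G₂.IsCollider i k j) ↔
      ModifiedVStable μ X hX := by
  constructor
  · intro hlhs G₁ G₂ hs1 hv1 hc1 hs2 hv2 hc2
    have hcol := hlhs G₁ G₂ ((satisfiesRule_iff μ X hX G₁).2 ⟨hs1, hv1, hc1⟩)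
      ((satisfiesRule_iff μ X hX G₂).2 ⟨hs2, hv2, hc2⟩)
    have hsk : ∀ u v, G₁.Adj u v ↔ G₂.Adj u v := fun u v => (hs1 u v).trans (hs2 u v).symm
    exact DAG.markovEquiv_of_same_skel_colliders hsk hcol
  · intro hrhs G₁ G₂ hr1 hr2 i k j
    obtain ⟨hs1, hv1, hc1⟩ := (satisfiesRule_iff μ X hX G₁).1 hr1
    obtain ⟨hs2, hv2, hc2⟩ := (satisfiesRule_iff μ X hX G₂).1 hr2
    have hme := hrhs G₁ G₂ hs1 hv1 hc1 hs2 hv2 hc2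
    have hsk : ∀ u v, G₁.Adj u v ↔ G₂.Adj u v := fun u v => (hs1 u v).trans (hs2 u v).symm
    exact ⟨fun h => DAG.same_colliders_of_markovEquiv hsk hme h,
      fun h => DAG.same_colliders_of_markovEquiv (fun u v => (hsk u v).symm)
        (DAG.MarkovEquiv.symm hme) h⟩
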